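/- arXiv:2102.07727 — 4 statements merged into one kernel-verified Lean document; each statement's English description precedes it below -/
import Mathlib

section
/- An index k ∈ supp(v) lies in the essential support esupp(v) if and only if there exists an invariant monomial ∏_{j∈supp(v)} x_j^{c_j} with nonnegative integer exponents such that c_k > 0. -/
open scoped BigOperators

noncomputable section

/-- Action of the torus `(ℂˣ)^d` on `ℂ^n` given by the integer weight matrix `M`:
coordinate `j` is scaled by the Laurent monomial `∏ i, (t i) ^ (M i j)`. -/
def torusAct {d n : ℕ} (M : Matrix (Fin d) (Fin n) ℤ) (t : Fin d → ℂˣ) (v : Fin n → ℂ) :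
    Fin n → ℂ := fun j => (∏ i, (t i : ℂ) ^ M i j) * v j

/-- The orbit of `v` under the torus action. -/
def torusOrbit {d n : ℕ} (M : Matrix (Fin d) (Fin n) ℤ) (v : Fin n → ℂ) : Set (Fin n → ℂ) :=
  {w | ∃ t : Fin d → ℂˣ, w = torusAct M t v}

/-- The Newton cone `C(v)`: the convex cone generated by the columns `m⁽ʲ⁾` of `M`
for `j` in the support of `v`. -/
def newtonCone {d n : ℕ} (M : Matrix (Fin d) (Fin n) ℤ) (v : Fin n → ℂ) : Set (Fin d → ℝ) :=
  {y | ∃ c : Fin n → ℝ, (∀ j, 0 ≤ c j) ∧ (∀ j, v j = 0 → c j = 0) ∧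
    y = ∑ j, c j • (fun i => (M i j : ℝ))}

/-- The lineality space `L(v) = C(v) ∩ (-C(v))` of the Newton cone. -/
def lineality {d n : ℕ} (M : Matrix (Fin d) (Fin n) ℤ) (v : Fin n → ℂ) : Set (Fin d → ℝ) :=
  newtonCone M v ∩ -newtonCone M v

/-- The essential support: indices `j` in the support of `v` whose weight column
lies in the lineality space of the Newton cone. -/
def esupp {d n : ℕ} (M : Matrix (Fin d) (Fin n) ℤ) (v : Fin n → ℂ) : Set (Fin n) :=
  {j | v j ≠ 0 ∧ (fun i => (M i j : ℝ)) ∈ lineality M v}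

/-! ### Auxiliary lemmas -/

lemma zpow_finset_sum' {α : Type*} [Field α] (x : α) (hx : x ≠ 0) {ι : Type*}
    (s : Finset ι) (f : ι → ℤ) : x ^ (∑ j ∈ s, f j) = ∏ j ∈ s, x ^ f j := by
  classical
  induction s using Finset.induction with
  | empty => simp
  | insert a s' h ih => rw [Finset.sum_insert h, Finset.prod_insert h, zpow_add₀ hx, ih]

/-- The invariance condition on a monomial is equivalent to the linear condition
`∑ j, c j * M i j = 0` for every row `i`. -/
lemma inv_iff' {d n : ℕ} (M : Matrix (Fin d) (Fin n) ℤ) (c : Fin n → ℕ) :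
    (∀ (t : Fin d → ℂˣ) (u : Fin n → ℂ),
        ∏ j, (torusAct M t u j) ^ c j = ∏ j, (u j) ^ c j) ↔
      ∀ i, ∑ j, (c j : ℤ) * M i j = 0 := by
  constructor
  · intro h i
    have h1 := h (fun i' => if i' = i then Units.mk0 (2:ℂ) two_ne_zero else 1) (fun _ => 1)
    simp only [torusAct, mul_one, one_pow, Finset.prod_const_one] at h1
    have h2 : ∀ j, (∏ i', ((if i' = i then Units.mk0 (2:ℂ) two_ne_zero else 1 : ℂˣ) : ℂ) ^ M i' j)
        = (2:ℂ) ^ M i j := by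
      intro j
      rw [Finset.prod_eq_single i]
      · simp
      · intro i' _ hne; simp [hne]
      · simp
    simp only [h2] at h1
    have h3 : (2:ℂ) ^ (∑ j, M i j * (c j : ℤ)) = 1 := by
      rw [zpow_finset_sum' _ two_ne_zero]
      rw [← h1]
      congr 1
      ext j
      rw [zpow_mul, zpow_natCast]
    have h4 : (2:ℝ) ^ (∑ j, M i j * (c j : ℤ)) = 1 := by
      have := congrArg (fun z : ℂ => ‖z‖) h3
      rwa [norm_zpow, Complex.norm_two, norm_one] at this
    have h5 : (∑ j, M i j * (c j : ℤ)) = 0 := by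
      have : (2:ℝ) ^ (∑ j, M i j * (c j : ℤ)) = (2:ℝ) ^ (0:ℤ) := by simpa using h4
      exact zpow_right_injective₀ (by norm_num) (by norm_num) this
    rw [← h5]
    exact Finset.sum_congr rfl fun j _ => mul_comm _ _
  · intro h t u
    simp only [torusAct, mul_pow, Finset.prod_mul_distrib]
    have h1 : ∏ j, (∏ i, (t i : ℂ) ^ M i j) ^ c j = 1 := by
      have : ∀ j, (∏ i, (t i : ℂ) ^ M i j) ^ c j = ∏ i, (t i : ℂ) ^ (M i j * (c j : ℤ)) := by
        intro j
        rw [← Finset.prod_pow]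
        exact Finset.prod_congr rfl fun i _ => by rw [zpow_mul, zpow_natCast]
      simp only [this]
      rw [Finset.prod_comm]
      have : ∀ i, ∏ j, (t i : ℂ) ^ (M i j * (c j : ℤ)) = 1 := by
        intro i
        rw [← zpow_finset_sum' _ (Units.ne_zero (t i))]
        have : (∑ j, M i j * (c j : ℤ)) = 0 := by
          rw [← h i]; exact Finset.sum_congr rfl fun j _ => mul_comm _ _
        rw [this, zpow_zero]
      simp [this]
    rw [h1, one_mul]

/-- A rational vector in the real span of rational vectors lies in their rational span. -/
lemma rat_mem_span' {d : ℕ} {ι : Type*} [Fintype ι] (w : ι → Fin d → ℚ) (b : Fin d → ℚ)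
    (hb : (fun i => (b i : ℝ)) ∈ Submodule.span ℝ (Set.range (fun j => (fun i => (w j i : ℝ))))) :
    b ∈ Submodule.span ℚ (Set.range w) := by
  classical
  by_contra hnb
  set Wq := Submodule.span ℚ (Set.range w) with hWq
  have hq : (Submodule.Quotient.mk b : (Fin d → ℚ) ⧸ Wq) ≠ 0 := by
    intro h; exact hnb ((Submodule.Quotient.mk_eq_zero Wq).mp h)
  obtain ⟨φ, hφ⟩ : ∃ φ : Module.Dual ℚ ((Fin d → ℚ) ⧸ Wq), φ (Submodule.Quotient.mk b) ≠ 0 := by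
    by_contra hall
    push_neg at hall
    exact hq ((Module.forall_dual_apply_eq_zero_iff ℚ _).mp hall)
  set ψ : (Fin d → ℚ) →ₗ[ℚ] ℚ := φ.comp Wq.mkQ with hψdef
  set r : Fin d → ℚ := fun i => ψ (fun i' => if i = i' then 1 else 0) with hr
  have hψ : ∀ x, ψ x = ∑ i, x i * r i := by
    intro x
    rw [LinearMap.pi_apply_eq_sum_univ ψ x]
    simp [r, smul_eq_mul]
  set Ψ : ((Fin d → ℝ) →ₗ[ℝ] ℝ) := ∑ i, (r i : ℝ) • LinearMap.proj i with hΨ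
  have hΨapp : ∀ x : Fin d → ℝ, Ψ x = ∑ i, x i * (r i : ℝ) := by
    intro x
    simp [hΨ, LinearMap.sum_apply, LinearMap.smul_apply, LinearMap.proj_apply, mul_comm]
  have hcast : ∀ y : Fin d → ℚ, Ψ (fun i => (y i : ℝ)) = ((ψ y : ℚ) : ℝ) := by
    intro y
    rw [hΨapp, hψ]
    push_cast
    rfl
  have hker : Submodule.span ℝ (Set.range (fun j => (fun i => (w j i : ℝ)))) ≤ LinearMap.ker Ψ := by
    rw [Submodule.span_le]
    rintro x ⟨j, rfl⟩
    simp only [SetLike.mem_coe, LinearMap.mem_ker]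
    rw [hcast]
    have : ψ (w j) = 0 := by
      have hmem : w j ∈ Wq := Submodule.subset_span (Set.mem_range_self j)
      simp [hψdef, (Submodule.Quotient.mk_eq_zero Wq).mpr hmem]
    rw [this]; norm_num
  have hzero : Ψ (fun i => (b i : ℝ)) = 0 := hker hb
  rw [hcast] at hzero
  have : ψ b = 0 := by exact_mod_cast hzero
  exact hφ (by simpa [hψdef] using this)

/-- Rationality of conical combinations: if a rational vector is a nonnegative real
combination of rational vectors, it is a nonnegative rational combination of them. -/
lemma cone_rat' {d n : ℕ} (w : Fin n → Fin d → ℚ) (b : Fin d → ℚ) (s : Finset (Fin n)) :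
    ∀ (a : Fin n → ℝ), (∀ j, 0 ≤ a j) →
    ((fun i => (b i : ℝ)) = ∑ j ∈ s, a j • (fun i => (w j i : ℝ))) →
    ∃ q : Fin n → ℚ, (∀ j, 0 ≤ q j) ∧ (∀ j, j ∉ s → q j = 0) ∧
      b = ∑ j ∈ s, q j • w j := by
  classical
  induction s using Finset.strongInduction with
  | _ s ih =>
  intro a ha hsum
  set W : Fin n → (Fin d → ℝ) := fun j => (fun i => (w j i : ℝ)) with hW
  by_cases hli : LinearIndependent ℝ (fun j : {x // x ∈ s} => W j)
  · -- linearly independent case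
    have hb_mem : (fun i => (b i : ℝ)) ∈
        Submodule.span ℝ (Set.range fun j : {x // x ∈ s} => W (j : Fin n)) := by
      rw [hsum, ← Finset.sum_attach s (fun j => a j • W j)]
      exact Submodule.sum_mem _ fun j _ =>
        Submodule.smul_mem _ _ (Submodule.subset_span (Set.mem_range_self j))
    have hbq : b ∈ Submodule.span ℚ (Set.range fun j : {x // x ∈ s} => w (j : Fin n)) :=
      rat_mem_span' _ _ hb_mem
    obtain ⟨cq, hcq⟩ := (Submodule.mem_span_range_iff_exists_fun ℚ).mp hbq
    set q : Fin n → ℚ := fun j => if h : j ∈ s then cq ⟨j, h⟩ else 0 with hq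
    have hqsum : b = ∑ j ∈ s, q j • w j := by
      rw [← Finset.sum_attach s (fun j => q j • w j), ← hcq]
      exact Finset.sum_congr rfl fun j _ => by simp [hq, j.2]
    have hqsumR : (fun i => (b i : ℝ)) = ∑ j ∈ s, (q j : ℝ) • W j := by
      funext i
      have := congrFun hqsum i
      simp only [Finset.sum_apply, Pi.smul_apply, smul_eq_mul] at this ⊢
      rw [this]
      push_cast
      rfl
    have hdiff : ∑ j : {x // x ∈ s}, ((q (j : Fin n) : ℝ) - a (j : Fin n)) • W (j : Fin n) = 0 := by
      have h1 : ∑ j : {x // x ∈ s}, (q (j:Fin n) : ℝ) • W (j:Fin n) = ∑ j ∈ s, (q j : ℝ) • W j :=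
        Finset.sum_coe_sort s (fun j => (q j : ℝ) • W j)
      have h2 : ∑ j : {x // x ∈ s}, a (j:Fin n) • W (j:Fin n) = ∑ j ∈ s, a j • W j :=
        Finset.sum_coe_sort s (fun j => a j • W j)
      simp only [sub_smul, Finset.sum_sub_distrib, h1, h2, ← hqsumR, ← hsum, sub_self]
      exact sub_eq_zero.mpr hsum
    have heq : ∀ j : {x // x ∈ s}, (q (j : Fin n) : ℝ) = a (j : Fin n) := by
      intro j
      have := Fintype.linearIndependent_iff.mp hli
        (fun j => (q (j : Fin n) : ℝ) - a (j : Fin n)) hdiff j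
      linarith [sub_eq_zero.mp this]
    refine ⟨q, ?_, ?_, hqsum⟩
    · intro j
      by_cases hj : j ∈ s
      · have := heq ⟨j, hj⟩
        have haj := ha j
        rw [← this] at haj
        exact_mod_cast haj
      · simp [hq, hj]
    · intro j hj; simp [hq, hj]
  · -- dependent case
    obtain ⟨g, hg0, jne, hgne⟩ := Fintype.not_linearIndependent_iff.mp hli
    set g' : Fin n → ℝ := fun j => if h : j ∈ s then g ⟨j, h⟩ else 0 with hg'
    have hrel : ∑ j ∈ s, g' j • W j = 0 := by
      rw [← Finset.sum_attach s (fun j => g' j • W j), ← hg0]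
      exact Finset.sum_congr rfl fun j _ => by simp [hg', j.2]
    have hex : ∃ j ∈ s, g' j ≠ 0 := ⟨jne, jne.2, by simp [hg', jne.2]; exact hgne⟩
    obtain ⟨g₂, hrel₂, hex₂⟩ : ∃ g₂ : Fin n → ℝ, (∑ j ∈ s, g₂ j • W j = 0) ∧ ∃ j ∈ s, 0 < g₂ j := by
      obtain ⟨j1, hj1s, hj1⟩ := hex
      rcases lt_or_gt_of_ne hj1 with hneg | hpos
      · refine ⟨-g', ?_, ⟨j1, hj1s, by simpa using hneg⟩⟩
        simp only [Pi.neg_apply, neg_smul, Finset.sum_neg_distrib, hrel, neg_zero]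
      · exact ⟨g', hrel, ⟨j1, hj1s, hpos⟩⟩
    set T : Finset (Fin n) := s.filter (fun j => 0 < g₂ j) with hT
    have hTne : T.Nonempty := by
      obtain ⟨j1, hj1s, hj1⟩ := hex₂
      exact ⟨j1, by simp [hT, hj1s, hj1]⟩
    obtain ⟨j0, hj0T, hj0min⟩ := Finset.exists_min_image T (fun j => a j / g₂ j) hTne
    have hj0s : j0 ∈ s := (Finset.mem_filter.mp hj0T).1
    have hj0pos : 0 < g₂ j0 := (Finset.mem_filter.mp hj0T).2
    set τ : ℝ := a j0 / g₂ j0 with hτ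
    have hτ0 : 0 ≤ τ := div_nonneg (ha j0) hj0pos.le
    set a' : Fin n → ℝ := fun j => if j ∈ s then a j - τ * g₂ j else 0 with ha'
    have ha'nonneg : ∀ j, 0 ≤ a' j := by
      intro j
      by_cases hjs : j ∈ s
      · simp only [ha', if_pos hjs]
        by_cases hgj : 0 < g₂ j
        · have hjT : j ∈ T := Finset.mem_filter.mpr ⟨hjs, hgj⟩
          have h' := (le_div_iff₀ hgj).mp (hj0min j hjT)
          linarith
        · push_neg at hgj
          nlinarith [ha j, hτ0, mul_nonpos_of_nonneg_of_nonpos hτ0 hgj]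
      · simp [ha', hjs]
    have ha'j0 : a' j0 = 0 := by
      simp only [ha', if_pos hj0s, hτ]
      field_simp
      simp
    have hsum' : (fun i => (b i : ℝ)) = ∑ j ∈ s.erase j0, a' j • W j := by
      have h1 : ∑ j ∈ s, a' j • W j = ∑ j ∈ s.erase j0, a' j • W j := by
        rw [← Finset.add_sum_erase s _ hj0s, ha'j0, zero_smul, zero_add]
      rw [← h1]
      have h2 : ∑ j ∈ s, a' j • W j = ∑ j ∈ s, a j • W j - τ • ∑ j ∈ s, g₂ j • W j := by
        rw [Finset.smul_sum, ← Finset.sum_sub_distrib]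
        refine Finset.sum_congr rfl fun j hj => ?_
        simp only [ha', if_pos hj, sub_smul, smul_smul]
      rw [h2, hrel₂, smul_zero, sub_zero, hsum]
    obtain ⟨q, hq0, hqsupp, hqsum⟩ := ih (s.erase j0) (Finset.erase_ssubset hj0s) a' ha'nonneg hsum'
    refine ⟨q, hq0, ?_, ?_⟩
    · intro j hj
      exact hqsupp j (fun hj' => hj (Finset.mem_of_mem_erase hj'))
    · rw [hqsum]
      have hqj0 : q j0 = 0 := hqsupp j0 (Finset.notMem_erase j0 s)
      rw [← Finset.add_sum_erase s _ hj0s, hqj0, zero_smul, zero_add]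

/-- `k ∈ supp v` lies in the essential support of `v` iff there exists an invariant monomial
`∏_{j ∈ supp v} x_j ^ c_j` with nonnegative integer exponents and `c_k > 0`. -/
theorem mem_esupp_iff_invariant_monomial {d n : ℕ} (M : Matrix (Fin d) (Fin n) ℤ)
    (v : Fin n → ℂ) (k : Fin n) (hk : v k ≠ 0) :
    k ∈ esupp M v ↔
      ∃ c : Fin n → ℕ, (∀ j, v j = 0 → c j = 0) ∧
        (∀ (t : Fin d → ℂˣ) (u : Fin n → ℂ),
          ∏ j, (torusAct M t u j) ^ c j = ∏ j, (u j) ^ c j) ∧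
        0 < c k := by
  classical
  constructor
  · rintro ⟨hvk, _, hmem2⟩
    rw [Set.mem_neg] at hmem2
    obtain ⟨a, ha0, hasupp, haeq⟩ := hmem2
    set w : Fin n → Fin d → ℚ := fun j i => (M i j : ℚ) with hw
    set bq : Fin d → ℚ := fun i => -(M i k : ℚ) with hbq
    set s : Finset (Fin n) := Finset.univ.filter (fun j => v j ≠ 0) with hs
    have hsum : (fun i => (bq i : ℝ)) = ∑ j ∈ s, a j • (fun i => (w j i : ℝ)) := by
      have hfull : (fun i => (bq i : ℝ)) = ∑ j, a j • (fun i => (w j i : ℝ)) := by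
        funext i
        have := congrFun haeq i
        simp only [Pi.neg_apply] at this
        simp only [hbq, hw, Rat.cast_neg, Rat.cast_intCast]
        rw [this]
      rw [hfull]
      symm
      apply Finset.sum_filter_of_ne
      intro j _ hne
      intro hvj
      exact hne (by rw [hasupp j hvj, zero_smul])
    obtain ⟨q, hq0, hqsupp, hqsum⟩ := cone_rat' w bq s a ha0 hsum
    have hqsum' : bq = ∑ j, q j • w j := by
      rw [hqsum]
      apply Finset.sum_filter_of_ne
      intro j _ hne hvj
      exact hne (by rw [hqsupp j (by simp [hs, hvj]), zero_smul])
    have hcoord : ∀ i, -(M i k : ℚ) = ∑ j, q j * (M i j : ℚ) := by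
      intro i
      have := congrFun hqsum' i
      simpa [hbq, hw, Finset.sum_apply] using this
    set N : ℕ := ∏ j, (q j).den with hN
    have hNpos : 0 < N := Finset.prod_pos fun j _ => (q j).pos
    have hNden : ∀ j, (q j).den ∣ N := fun j => Finset.dvd_prod_of_mem _ (Finset.mem_univ j)
    set z : Fin n → ℤ := fun j => (q j).num * ((N / (q j).den : ℕ) : ℤ) with hz
    have hzq : ∀ j, (z j : ℚ) = q j * N := by
      intro j
      have hden : ((q j).den : ℚ) ≠ 0 := by
        exact_mod_cast (q j).den_nz
      have hmul : ((N / (q j).den : ℕ) : ℚ) * ((q j).den : ℚ) = (N : ℚ) := by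
        exact_mod_cast congrArg (Nat.cast : ℕ → ℚ) (Nat.div_mul_cancel (hNden j))
      have hnum : ((q j).num : ℚ) = q j * ((q j).den : ℚ) :=
        (div_eq_iff hden).mp (Rat.num_div_den (q j))
      calc (z j : ℚ) = ((q j).num : ℚ) * ((N / (q j).den : ℕ) : ℚ) := by
            simp only [hz]; rw [Int.cast_mul, Int.cast_natCast]
        _ = q j * (((q j).den : ℚ) * ((N / (q j).den : ℕ) : ℚ)) := by rw [hnum]; ring
        _ = q j * N := by rw [mul_comm ((q j).den : ℚ), hmul]
    have hz0 : ∀ j, 0 ≤ z j := by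
      intro j
      exact mul_nonneg (Rat.num_nonneg.mpr (hq0 j)) (Int.ofNat_nonneg _)
    set c : Fin n → ℕ := fun j => (z j).toNat + (if j = k then N else 0) with hc
    have hcz : ∀ j, (c j : ℤ) = z j + (if j = k then (N:ℤ) else 0) := by
      intro j
      simp only [hc]
      push_cast [Int.toNat_of_nonneg (hz0 j)]
      by_cases hjk : j = k <;> simp [hjk]
    refine ⟨c, ?_, ?_, ?_⟩
    · intro j hvj
      have hjk : j ≠ k := fun h => hvk (h ▸ hvj)
      have hqj : q j = 0 := hqsupp j (by simp [hs, hvj])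
      have : z j = 0 := by
        have := hzq j
        rw [hqj, zero_mul] at this
        exact_mod_cast this
      simp [hc, this, hjk]
    · rw [inv_iff']
      intro i
      have key : ((∑ j, (c j : ℤ) * M i j : ℤ) : ℚ) = 0 := by
        push_cast [hcz]
        have expand : ∀ j, ((z j : ℚ) + (if j = k then (N:ℚ) else 0)) * (M i j : ℚ)
            = q j * N * (M i j : ℚ) + (if j = k then (N:ℚ) * (M i j : ℚ) else 0) := by
          intro j
          rw [hzq j]
          by_cases hjk : j = k <;> simp [hjk] <;> ring
        rw [Finset.sum_congr rfl (fun j _ => expand j), Finset.sum_add_distrib]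
        rw [Finset.sum_ite_eq' Finset.univ k (fun j => (N:ℚ) * (M i j : ℚ))]
        have : ∑ j, q j * (N:ℚ) * (M i j : ℚ) = (N:ℚ) * ∑ j, q j * (M i j : ℚ) := by
          rw [Finset.mul_sum]
          exact Finset.sum_congr rfl fun j _ => by ring
        rw [this, ← hcoord i]
        simp
      exact_mod_cast key
    · have hck' : c k = (z k).toNat + N := by simp [hc]
      omega
  · rintro ⟨c, hcsupp, hcinv, hck⟩
    have hMzero : ∀ i, ∑ j, (c j : ℤ) * M i j = 0 := (inv_iff' M c).mp hcinv
    have hMzeroR : ∀ i, ∑ j, (c j : ℝ) * (M i j : ℝ) = 0 := by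
      intro i
      have := hMzero i
      have : ((∑ j, (c j : ℤ) * M i j : ℤ) : ℝ) = 0 := by rw [this]; norm_num
      push_cast at this
      exact this
    have hckR : (0:ℝ) < (c k : ℝ) := by exact_mod_cast hck
    refine ⟨hk, ?_, ?_⟩
    · -- M_k ∈ newtonCone
      refine ⟨fun j => if j = k then 1 else 0, ?_, ?_, ?_⟩
      · intro j; by_cases hjk : j = k <;> simp [hjk]
      · intro j hvj
        have hjk : j ≠ k := fun h => hk (h ▸ hvj)
        simp [hjk]
      · funext i
        rw [Finset.sum_apply]
        simp only [Pi.smul_apply, smul_eq_mul, ite_mul, one_mul, zero_mul]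
        rw [Finset.sum_ite_eq' Finset.univ k (fun j => (M i j : ℝ))]
        simp
    · -- M_k ∈ -newtonCone
      rw [Set.mem_neg]
      refine ⟨fun j => if j = k then 0 else (c j : ℝ) / (c k : ℝ), ?_, ?_, ?_⟩
      · intro j
        by_cases hjk : j = k
        · simp [hjk]
        · simp only [if_neg hjk]
          positivity
      · intro j hvj
        simp [hcsupp j hvj]
      · funext i
        rw [Pi.neg_apply, Finset.sum_apply]
        simp only [Pi.smul_apply, smul_eq_mul, ite_mul, zero_mul]
        have hsplit : ∑ j, (if j = k then (0:ℝ) else (c j : ℝ) / (c k : ℝ) * (M i j : ℝ))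
            = (∑ j, (c j : ℝ) / (c k : ℝ) * (M i j : ℝ)) - (c k : ℝ) / (c k : ℝ) * (M i k : ℝ) := by
          have : ∀ j, (if j = k then (0:ℝ) else (c j : ℝ) / (c k : ℝ) * (M i j : ℝ))
              = (c j : ℝ) / (c k : ℝ) * (M i j : ℝ)
                - (if j = k then (c j : ℝ) / (c k : ℝ) * (M i j : ℝ) else 0) := by
            intro j; by_cases hjk : j = k <;> simp [hjk]
          rw [Finset.sum_congr rfl (fun j _ => this j), Finset.sum_sub_distrib]
          rw [Finset.sum_ite_eq' Finset.univ k (fun j => (c j : ℝ) / (c k : ℝ) * (M i j : ℝ))]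
          simp
        rw [hsplit]
        have hsum0 : ∑ j, (c j : ℝ) / (c k : ℝ) * (M i j : ℝ) = 0 := by
          have : ∑ j, (c j : ℝ) / (c k : ℝ) * (M i j : ℝ)
              = (∑ j, (c j : ℝ) * (M i j : ℝ)) / (c k : ℝ) := by
            rw [Finset.sum_div]
            exact Finset.sum_congr rfl fun j _ => by ring
          rw [this, hMzeroR i, zero_div]
        rw [hsum0, div_self (ne_of_gt hckR)]
        ring
end
end

section
/- A vector v is in the null cone of the torus action (i.e., 0 ∈ closure(O_v)) if and only if esupp(v) = ∅, equivalently if and only if the Newton cone C(v) is pointed and m^{(j)} ≠ 0 for all j ∈ supp(v). -/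
open scoped BigOperators

noncomputable section

lemma exp_zpow (a : ℝ) (k : ℤ) : (Real.exp a) ^ k = Real.exp (k * a) := by
  rw [← Real.rpow_intCast, Real.rpow_def_of_pos (Real.exp_pos a), Real.log_exp, mul_comm]

/-- KEY 1 : if `0` is in the orbit closure then `esupp` is empty. -/
lemma key1 {d n : ℕ} (M : Matrix (Fin d) (Fin n) ℤ) (v : Fin n → ℂ)
    (h : (0 : Fin n → ℂ) ∈ closure (torusOrbit M v)) : esupp M v = ∅ := by
  by_contra hne
  obtain ⟨j₀, hj₀⟩ := Set.nonempty_iff_ne_empty.2 hne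
  obtain ⟨hvj₀, hC, hC'⟩ := hj₀
  rw [Set.mem_neg] at hC'
  obtain ⟨c', hc'0, hc's, hc'⟩ := hC'
  -- the relation : a j = c' j + indicator j₀, with ∑ j, a j * M i j = 0
  obtain ⟨a, ha0, haj₀, has, harel⟩ :
      ∃ a : Fin n → ℝ, (∀ j, 0 ≤ a j) ∧ 0 < a j₀ ∧ (∀ j, a j ≠ 0 → v j ≠ 0) ∧
        ∀ i : Fin d, ∑ j, a j * (M i j : ℝ) = 0 := by
    refine ⟨fun j => c' j + (if j = j₀ then 1 else 0), fun j => add_nonneg (hc'0 j) (by split <;> norm_num),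
      by simp; linarith [hc'0 j₀], ?_, ?_⟩
    · intro j hj hv
      apply hj
      show c' j + _ = 0
      rw [hc's j hv, if_neg, add_zero]
      rintro rfl; exact hvj₀ hv
    · intro i
      have h1 := congrFun hc' i
      simp only [Finset.sum_apply, Pi.smul_apply, smul_eq_mul, Pi.neg_apply] at h1
      simp only [add_mul, Finset.sum_add_distrib, one_mul, ite_mul, zero_mul,
        Finset.sum_ite_eq' Finset.univ j₀, Finset.mem_univ, if_true, ← h1]
      ring
  -- the invariant function
  set F : (Fin n → ℂ) → ℝ := fun w => ∏ j, ‖w j‖ ^ (a j) with hF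
  have hFcont : Continuous F := by
    refine continuous_finset_prod _ (fun j _ => ?_)
    exact (Real.continuous_rpow_const (ha0 j)).comp
      (continuous_norm.comp (continuous_apply j))
  have hF0 : F 0 = 0 := by
    rw [hF]
    refine Finset.prod_eq_zero (Finset.mem_univ j₀) ?_
    simp [Real.zero_rpow haj₀.ne']
  have hFv : 0 < F v := by
    rw [hF]
    refine Finset.prod_pos (fun j _ => ?_)
    rcases eq_or_ne (a j) 0 with h' | h'
    · simp [h']
    · exact Real.rpow_pos_of_pos (by simpa using has j h') _
  have hFinv : ∀ w ∈ torusOrbit M v, F w = F v := by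
    rintro w ⟨t, rfl⟩
    rw [hF]
    simp only [torusAct]
    have habs : ∀ j : Fin n,
        ‖(∏ i, (t i : ℂ) ^ M i j) * v j‖ ^ (a j)
          = Real.exp (a j * ∑ i, (M i j : ℝ) * Real.log ‖(t i : ℂ)‖)
            * ‖v j‖ ^ (a j) := by
      intro j
      rw [norm_mul, Real.mul_rpow (by positivity) (by positivity)]
      congr 1
      rw [norm_prod]
      have hposj : (0:ℝ) < ∏ i, ‖(t i : ℂ) ^ M i j‖ := by
        refine Finset.prod_pos (fun i _ => ?_)
        rw [norm_zpow]
        exact zpow_pos (norm_pos_iff.2 (t i).ne_zero) _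
      rw [Real.rpow_def_of_pos hposj, Real.log_prod (fun i _ => norm_ne_zero_iff.2 (zpow_ne_zero _ (t i).ne_zero))]
      congr 1
      rw [mul_comm]
      congr 1
      refine Finset.sum_congr rfl (fun i _ => ?_)
      rw [norm_zpow, Real.log_zpow]
    rw [Finset.prod_congr rfl (fun j _ => habs j), Finset.prod_mul_distrib,
      ← Real.exp_sum]
    have hz : ∑ j, a j * ∑ i, (M i j : ℝ) * Real.log ‖(t i : ℂ)‖ = 0 := by
      simp only [Finset.mul_sum]
      rw [Finset.sum_comm]
      refine Finset.sum_eq_zero (fun i _ => ?_)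
      have h3 : ∀ j : Fin n, a j * ((M i j:ℝ) * Real.log ‖(t i : ℂ)‖)
          = (a j * (M i j:ℝ)) * Real.log ‖(t i : ℂ)‖ := fun j => (mul_assoc _ _ _).symm
      rw [Finset.sum_congr rfl (fun j _ => h3 j), ← Finset.sum_mul, harel i, zero_mul]
    rw [hz, Real.exp_zero, one_mul]
  -- conclude
  have hsub : closure (torusOrbit M v) ⊆ F ⁻¹' {F v} :=
    closure_minimal (fun w hw => hFinv w hw) (IsClosed.preimage hFcont isClosed_singleton)
  have := hsub h
  simp only [Set.mem_preimage, Set.mem_singleton_iff] at this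
  rw [hF0] at this
  exact absurd this.symm hFv.ne'

/-- Helper: a nontrivial nonneg relation among supported columns puts a column in the lineality. -/
lemma mem_lineality_of_rel {d n : ℕ} (M : Matrix (Fin d) (Fin n) ℤ) (v : Fin n → ℂ)
    (c : Fin n → ℝ) (hc0 : ∀ j, 0 ≤ c j) (hcs : ∀ j, v j = 0 → c j = 0)
    (hrel : ∑ j, c j • (fun i => (M i j : ℝ)) = (0 : Fin d → ℝ)) (j₀ : Fin n)
    (hj₀ : c j₀ ≠ 0) : (fun i => (M i j₀ : ℝ)) ∈ lineality M v := by
  have hvj₀ : v j₀ ≠ 0 := fun hv => hj₀ (hcs j₀ hv)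
  have hj₀pos : 0 < c j₀ := lt_of_le_of_ne (hc0 j₀) (Ne.symm hj₀)
  constructor
  · refine ⟨fun j => if j = j₀ then 1 else 0,
      fun j => by show (0:ℝ) ≤ if j = j₀ then 1 else 0; split <;> norm_num,
      fun j hv => ?_, ?_⟩
    · show (if j = j₀ then (1:ℝ) else 0) = 0
      rw [if_neg]; rintro rfl; exact hvj₀ hv
    · show _ = ∑ j : Fin n, (if j = j₀ then (1:ℝ) else 0) • (fun i => ((M i j : ℝ)))
      simp [ite_smul]
  · rw [Set.mem_neg]
    refine ⟨fun j => if j = j₀ then 0 else c j / c j₀,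
      fun j => by
        show (0:ℝ) ≤ if j = j₀ then 0 else c j / c j₀
        split
        exacts [le_refl 0, div_nonneg (hc0 j) hj₀pos.le], fun j hv => ?_, ?_⟩
    · show (if j = j₀ then (0:ℝ) else c j / c j₀) = 0
      split
      · rfl
      · rw [hcs j hv, zero_div]
    · show _ = ∑ j : Fin n, (if j = j₀ then (0:ℝ) else c j / c j₀) • (fun i => ((M i j : ℝ)))
      have hsplit : ∀ j : Fin n,
          (if j = j₀ then (0:ℝ) else c j / c j₀) • (fun i => (M i j : ℝ))
            = (c j₀)⁻¹ • ((c j • fun i => (M i j : ℝ))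
                - (if j = j₀ then c j₀ • (fun i => (M i j₀ : ℝ)) else 0)) := by
        intro j
        rcases eq_or_ne j j₀ with rfl | hne
        · simp
        · rw [if_neg hne, if_neg hne, sub_zero, smul_smul, div_eq_inv_mul]
      rw [Finset.sum_congr rfl (fun j _ => hsplit j), ← Finset.smul_sum]
      rw [Finset.sum_sub_distrib, hrel,
        Finset.sum_ite_eq' Finset.univ j₀ (fun _ => c j₀ • fun i => ((M i j₀ : ℝ)))]
      simp only [Finset.mem_univ, if_true, zero_sub, smul_neg, smul_smul,
        inv_mul_cancel₀ hj₀, one_smul]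

lemma key2 {d n : ℕ} (M : Matrix (Fin d) (Fin n) ℤ) (v : Fin n → ℂ)
    (h : esupp M v = ∅) :
    lineality M v = {0} ∧ ∀ j, v j ≠ 0 → (fun i => (M i j : ℝ)) ≠ 0 := by
  have hes : ∀ j, v j ≠ 0 → (fun i => (M i j : ℝ)) ∉ lineality M v := by
    intro j hvj hmem
    exact absurd (h ▸ (⟨hvj, hmem⟩ : j ∈ esupp M v) : j ∈ (∅ : Set (Fin n))) (Set.notMem_empty j)
  have hzero_mem : (0 : Fin d → ℝ) ∈ newtonCone M v :=
    ⟨0, fun j => le_refl 0, fun j _ => rfl, by simp⟩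
  constructor
  · ext y
    simp only [Set.mem_singleton_iff]
    constructor
    · rintro ⟨⟨c, hc0, hcs, hcy⟩, hneg⟩
      rw [Set.mem_neg] at hneg
      obtain ⟨c', hc'0, hc's, hc'y⟩ := hneg
      by_contra hy
      have hex : ∃ j₀, c j₀ ≠ 0 := by
        by_contra hall
        push_neg at hall
        exact hy (by rw [hcy]; simp [hall])
      obtain ⟨j₀, hj₀⟩ := hex
      have hrel : ∑ j, (c j + c' j) • (fun i => (M i j : ℝ)) = (0 : Fin d → ℝ) := by
        have : ∀ j : Fin n, (c j + c' j) • (fun i => (M i j : ℝ))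
            = c j • (fun i => (M i j : ℝ)) + c' j • (fun i => (M i j : ℝ)) :=
          fun j => add_smul _ _ _
        rw [Finset.sum_congr rfl (fun j _ => this j), Finset.sum_add_distrib, ← hcy, ← hc'y]
        simp
      have := mem_lineality_of_rel M v (fun j => c j + c' j)
        (fun j => add_nonneg (hc0 j) (hc'0 j))
        (fun j hv => by show c j + c' j = 0; rw [hcs j hv, hc's j hv, add_zero])
        hrel j₀ (add_pos_of_pos_of_nonneg (lt_of_le_of_ne (hc0 j₀) (Ne.symm hj₀)) (hc'0 j₀)).ne'
      exact hes j₀ (fun hv => hj₀ (hcs j₀ hv)) this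
    · rintro rfl
      exact ⟨hzero_mem, by rw [Set.mem_neg, neg_zero]; exact hzero_mem⟩
  · intro j hvj hcol
    refine hes j hvj ⟨?_, ?_⟩
    · rw [hcol]; exact hzero_mem
    · rw [hcol, Set.mem_neg, neg_zero]; exact hzero_mem

lemma key2' {d n : ℕ} (M : Matrix (Fin d) (Fin n) ℤ) (v : Fin n → ℂ)
    (h1 : lineality M v = {0}) (h2 : ∀ j, v j ≠ 0 → (fun i => (M i j : ℝ)) ≠ 0) :
    esupp M v = ∅ := by
  ext j
  simp only [Set.mem_empty_iff_false, iff_false]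
  rintro ⟨hvj, hmem⟩
  rw [h1, Set.mem_singleton_iff] at hmem
  exact h2 j hvj hmem

lemma key3 {d n : ℕ} (M : Matrix (Fin d) (Fin n) ℤ) (v : Fin n → ℂ)
    (h1 : lineality M v = {0}) (h2 : ∀ j, v j ≠ 0 → (fun i => (M i j : ℝ)) ≠ 0) :
    (0 : Fin n → ℂ) ∈ closure (torusOrbit M v) := by
  -- Step 1 : a strictly separating linear functional
  obtain ⟨f, hf⟩ : ∃ f : (Fin d → ℝ) →L[ℝ] ℝ,
      ∀ j, v j ≠ 0 → f (fun i => (M i j : ℝ)) < 0 := by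
    set D : Set (Fin n → ℝ) :=
      {c | (∀ j, 0 ≤ c j) ∧ (∀ j, v j = 0 → c j = 0) ∧ ∑ j, c j = 1} with hD
    set T : Set (Fin d → ℝ) :=
      (fun c : Fin n → ℝ => ∑ j, c j • fun i => (M i j : ℝ)) '' D with hT
    have hDclosed : IsClosed D := by
      have e : D = (⋂ j, {c : Fin n → ℝ | 0 ≤ c j}) ∩
          ((⋂ j, {c : Fin n → ℝ | v j = 0 → c j = 0}) ∩ {c | ∑ j, c j = 1}) := by
        ext c; simp only [hD, Set.mem_setOf_eq, Set.mem_inter_iff, Set.mem_iInter]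
      rw [e]
      refine (isClosed_iInter fun j => isClosed_le continuous_const (continuous_apply j)).inter
        ((isClosed_iInter fun j => ?_).inter
          (isClosed_eq (continuous_finset_sum _ fun j _ => continuous_apply j) continuous_const))
      by_cases hv : v j = 0
      · simp only [hv, forall_true_left]
        exact isClosed_eq (continuous_apply j) continuous_const
      · simp only [hv, false_implies, Set.setOf_true]
        exact isClosed_univ
    have hDsub : D ⊆ Set.Icc 0 1 := by
      rintro c ⟨hc0, _, hcs⟩
      refine ⟨fun j => hc0 j, fun j => ?_⟩
      calc c j ≤ ∑ j', c j' := Finset.single_le_sum (fun j' _ => hc0 j') (Finset.mem_univ j)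
      _ = 1 := hcs
    have hDcompact : IsCompact D := (isCompact_Icc).of_isClosed_subset hDclosed hDsub
    have hmapcont : Continuous (fun c : Fin n → ℝ => ∑ j, c j • fun i => (M i j : ℝ)) :=
      continuous_finset_sum _ fun j _ => (continuous_apply j).smul continuous_const
    have hTcompact : IsCompact T := hDcompact.image hmapcont
    have hTconvex : Convex ℝ T := by
      rintro x ⟨c, ⟨hc0, hcs, hc1⟩, rfl⟩ y ⟨c', ⟨hc'0, hc's, hc'1⟩, rfl⟩ a b ha hb hab
      refine ⟨fun j => a * c j + b * c' j, ⟨fun j => by show 0 ≤ a * c j + b * c' j; exact add_nonneg (mul_nonneg ha (hc0 j)) (mul_nonneg hb (hc'0 j)),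
        fun j hv => by
        show a * c j + b * c' j = 0
        rw [hcs j hv, hc's j hv, mul_zero, mul_zero, add_zero], ?_⟩, ?_⟩
      · rw [Finset.sum_add_distrib, ← Finset.mul_sum, ← Finset.mul_sum, hc1, hc'1,
          mul_one, mul_one, hab]
      · simp only [smul_eq_mul]
        rw [Finset.smul_sum, Finset.smul_sum, ← Finset.sum_add_distrib]
        refine Finset.sum_congr rfl fun j _ => ?_
        rw [smul_smul, smul_smul, ← add_smul]
    have h0T : (0 : Fin d → ℝ) ∉ T := by
      rintro ⟨c, ⟨hc0, hcs, hc1⟩, hc⟩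
      have hex : ∃ j₀, c j₀ ≠ 0 := by
        by_contra hall
        push_neg at hall
        rw [Finset.sum_congr rfl (fun j _ => hall j)] at hc1
        simp at hc1
      obtain ⟨j₀, hj₀⟩ := hex
      have hmem := mem_lineality_of_rel M v c hc0 hcs hc j₀ hj₀
      rw [h1, Set.mem_singleton_iff] at hmem
      exact h2 j₀ (fun hv => hj₀ (hcs j₀ hv)) hmem
    obtain ⟨f, u, u', hfu, huu', hu'⟩ :=
      geometric_hahn_banach_compact_closed hTconvex hTcompact (convex_singleton 0)
        isClosed_singleton (Set.disjoint_singleton_right.2 h0T)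
    have hu'0 : u' < 0 := by simpa using hu' 0 rfl
    refine ⟨f, fun j hvj => ?_⟩
    have hcolT : (fun i => (M i j : ℝ)) ∈ T := by
      refine ⟨fun j' => if j' = j then 1 else 0,
        ⟨fun j' => by show (0:ℝ) ≤ if j' = j then 1 else 0; split <;> norm_num,
         fun j' hv => by
          show (if j' = j then (1:ℝ) else 0) = 0
          rw [if_neg]; rintro rfl; exact hvj hv, by simp⟩, ?_⟩
      show ∑ j' : Fin n, (if j' = j then (1:ℝ) else 0) • (fun i => ((M i j' : ℝ))) = _
      simp [ite_smul]
    exact lt_trans (lt_trans (hfu _ hcolT) huu') hu'0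
  -- Step 2 : drive to zero along a one-parameter subgroup
  set θ : Fin d → ℝ := fun i => f (fun k => if i = k then (1 : ℝ) else 0) with hθ
  have hfcol : ∀ j, f (fun i => (M i j : ℝ)) = ∑ i, (M i j : ℝ) * θ i := by
    intro j
    conv_lhs => rw [pi_eq_sum_univ (fun i => (M i j : ℝ)), map_sum]
    exact Finset.sum_congr rfl fun i _ => by rw [map_smul]; rfl
  set ts : ℕ → Fin d → ℂˣ := fun s i =>
    Units.mk0 ((Real.exp (s * θ i) : ℝ) : ℂ)
      (Complex.ofReal_ne_zero.mpr (Real.exp_pos _).ne') with hts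
  refine mem_closure_of_tendsto (f := fun s : ℕ => torusAct M (ts s) v) (b := Filter.atTop) ?_
    (Filter.Eventually.of_forall fun s => ⟨ts s, rfl⟩)
  rw [tendsto_pi_nhds]
  intro j
  simp only [torusAct, Pi.zero_apply]
  by_cases hvj : v j = 0
  · simp [hvj]
  · have hkey : ∀ s : ℕ, (∏ i, ((ts s i : ℂ)) ^ M i j)
        = ((Real.exp ((s : ℝ) * f (fun i => (M i j : ℝ))) : ℝ) : ℂ) := by
      intro s
      have e1 : ∏ i, ((ts s i : ℂ)) ^ M i j
          = ((∏ i, Real.exp ((s : ℝ) * θ i) ^ M i j : ℝ) : ℂ) := by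
        rw [hts]; push_cast; rfl
      rw [e1]
      congr 1
      rw [Finset.prod_congr rfl (fun i _ => exp_zpow ((s:ℝ) * θ i) (M i j)), ← Real.exp_sum]
      congr 1
      rw [hfcol j, Finset.mul_sum]
      exact Finset.sum_congr rfl fun i _ => by ring
    rw [Filter.tendsto_congr (fun s => by rw [hkey s])]
    have hL : f (fun i => (M i j : ℝ)) < 0 := hf j hvj
    have h1 : Filter.Tendsto (fun s : ℕ => Real.exp ((s : ℝ) * f (fun i => (M i j : ℝ))))
        Filter.atTop (nhds 0) :=
      Real.tendsto_exp_atBot.comp (tendsto_natCast_atTop_atTop.atTop_mul_const_of_neg hL)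
    have h2' : Filter.Tendsto
        (fun s : ℕ => ((Real.exp ((s : ℝ) * f (fun i => (M i j : ℝ))) : ℝ) : ℂ))
        Filter.atTop (nhds 0) := by
      have := (Complex.continuous_ofReal.tendsto 0).comp h1
      simpa [Function.comp_def, -Complex.ofReal_exp] using this
    simpa [-Complex.ofReal_exp] using h2'.mul_const (v j)

/-- `v` is in the null cone (i.e. `0 ∈ closure (O_v)`) iff `esupp v = ∅`, equivalently iff the
Newton cone `C(v)` is pointed and `m⁽ʲ⁾ ≠ 0` for all `j ∈ supp v`. -/
theorem mem_null_cone_iff {d n : ℕ} (M : Matrix (Fin d) (Fin n) ℤ) (v : Fin n → ℂ) :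
    ((0 : Fin n → ℂ) ∈ closure (torusOrbit M v) ↔ esupp M v = ∅) ∧
    ((0 : Fin n → ℂ) ∈ closure (torusOrbit M v) ↔
      (lineality M v = {0} ∧ ∀ j, v j ≠ 0 → (fun i => (M i j : ℝ)) ≠ 0)) := by
  have A := key1 M v
  have B := key2 M v
  have C : (lineality M v = {0} ∧ ∀ j, v j ≠ 0 → (fun i => (M i j : ℝ)) ≠ 0) →
      (0 : Fin n → ℂ) ∈ closure (torusOrbit M v) := fun h => key3 M v h.1 h.2
  exact ⟨⟨A, fun h => C (B h)⟩, ⟨fun h => B (A h), C⟩⟩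
end
end

section
/- Suppose supp(v) = supp(w) = S for two vectors v, w under a torus action. Then O_v ≠ O_w if and only if there exists an invariant Laurent monomial f = ∏_{j∈S} x_j^{c_j} (with c ∈ ℤ^S, ∑_j c_j m^{(j)} = 0) such that f(v) ≠ f(w). -/
open scoped BigOperators

noncomputable section

/-- Every unit of `ℂ` has `n`-th roots for every nonzero integer `n`. -/
lemma exists_zpow_root (m : ℤ) (hm : m ≠ 0) (z : ℂˣ) : ∃ x : ℂˣ, x ^ m = z := by
  have key : ∀ (k : ℕ), k ≠ 0 → ∀ z : ℂˣ, ∃ x : ℂˣ, x ^ (k : ℤ) = z := by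
    intro k hk z
    obtain ⟨y, hy⟩ := IsAlgClosed.exists_pow_nat_eq (z : ℂ) (Nat.pos_of_ne_zero hk)
    have hy0 : y ≠ 0 := by
      intro h
      rw [h, zero_pow hk] at hy
      exact z.ne_zero hy.symm
    refine ⟨Units.mk0 y hy0, ?_⟩
    ext
    rw [zpow_natCast]
    push_cast
    simpa using hy
  obtain ⟨k, rfl | rfl⟩ := m.eq_nat_or_neg
  · exact key k (by exact_mod_cast hm) z
  · obtain ⟨x, hx⟩ := key k (by simpa using hm) z⁻¹
    exact ⟨x, by rw [zpow_neg, hx, inv_inv]⟩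

/-- `Additive ℂˣ` is a divisible group. -/
noncomputable instance : DivisibleBy (Additive ℂˣ) ℤ :=
  divisibleByOfSMulRightSurj _ _ (fun {m} hm a => by
    obtain ⟨x, hx⟩ := exists_zpow_root m hm a.toMul
    refine ⟨Additive.ofMul x, ?_⟩
    show m • Additive.ofMul x = a
    rw [← ofMul_zpow, hx]
    rfl)

lemma torusAct_mul {d n : ℕ} (M : Matrix (Fin d) (Fin n) ℤ) (t s : Fin d → ℂˣ)
    (v : Fin n → ℂ) : torusAct M t (torusAct M s v) = torusAct M (t * s) v := by
  funext j
  simp only [torusAct, Pi.mul_apply, Units.val_mul, mul_zpow, Finset.prod_mul_distrib]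
  ring

lemma torusOrbit_eq_of_act {d n : ℕ} (M : Matrix (Fin d) (Fin n) ℤ) (t : Fin d → ℂˣ)
    {v w : Fin n → ℂ} (h : w = torusAct M t v) : torusOrbit M v = torusOrbit M w := by
  ext x
  constructor
  · rintro ⟨s, rfl⟩
    exact ⟨s * t⁻¹, by rw [h, torusAct_mul, inv_mul_cancel_right]⟩
  · rintro ⟨s, rfl⟩
    exact ⟨s * t, by rw [h, torusAct_mul]⟩

/-- If `supp v = supp w = S`, then `O_v ≠ O_w` iff there is an invariant Laurent monomial
`∏_{j ∈ S} x_j ^ c j` (so `c` is supported on `S` and `∑_j c_j • m⁽ʲ⁾ = 0`) taking different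
values at `v` and `w`. -/
theorem orbit_ne_iff_separating_laurent_monomial {d n : ℕ} (M : Matrix (Fin d) (Fin n) ℤ)
    (v w : Fin n → ℂ) (S : Set (Fin n))
    (hv : {j | v j ≠ 0} = S) (hw : {j | w j ≠ 0} = S) :
    torusOrbit M v ≠ torusOrbit M w ↔
      ∃ c : Fin n → ℤ, (∀ j, j ∉ S → c j = 0) ∧
        (∀ i, ∑ j, c j * M i j = 0) ∧
        ∏ j, (v j) ^ c j ≠ ∏ j, (w j) ^ c j := by
  classical
  have hvw : ∀ j, v j = 0 ↔ w j = 0 := by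
    intro j
    constructor
    · intro h
      by_contra h'
      have : j ∈ S := hw ▸ h'
      rw [← hv] at this
      exact this h
    · intro h
      by_contra h'
      have : j ∈ S := hv ▸ h'
      rw [← hw] at this
      exact this h
  constructor
  · -- orbits differ → separating monomial; contrapositive
    intro hne
    by_contra hno
    push_neg at hno
    apply hne
    -- the hypothesis: every invariant monomial agrees on v and w
    have h : ∀ c : Fin n → ℤ, (∀ j, v j = 0 → c j = 0) → (∀ i, ∑ j, c j * M i j = 0) →
        ∏ j, (v j) ^ c j = ∏ j, (w j) ^ c j := by
      intro c hc1 hc2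
      apply hno c
      · intro j hj
        apply hc1
        by_contra h'
        exact hj (hv ▸ h')
      · exact hc2
    -- define units u j = w j / v j
    set u : Fin n → ℂˣ := fun j =>
      if hj : v j = 0 then 1 else Units.mk0 (w j / v j)
        (div_ne_zero (fun h' => hj ((hvw j).mpr h')) hj) with hu
    -- the monoid hom F
    set F : (Fin n → ℤ) →+ Additive ℂˣ :=
      { toFun := fun c => Additive.ofMul (∏ j, u j ^ c j)
        map_zero' := by simp
        map_add' := by
          intro c c'
          simp only [Pi.add_apply, zpow_add, Finset.prod_mul_distrib, ofMul_mul] } with hF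
    set ψ : (Fin n → ℤ) →+ (Fin d → ℤ) × (Fin n → ℤ) :=
      { toFun := fun c => (fun i => ∑ j, c j * M i j, fun j => if v j = 0 then c j else 0)
        map_zero' := by
          ext i <;> simp
        map_add' := by
          intro c c'
          ext i
          · simp [add_mul, Finset.sum_add_distrib]
          · simp only [Pi.add_apply, Prod.snd_add]
            split <;> simp } with hψ
    have hker : ∀ c ∈ ψ.ker, F c = 0 := by
      intro c hc
      rw [AddMonoidHom.mem_ker] at hc
      have hc1 : ∀ j, v j = 0 → c j = 0 := by
        intro j hj
        have := congrFun (congrArg Prod.snd hc) j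
        simpa [hψ, hj] using this
      have hc2 : ∀ i, ∑ j, c j * M i j = 0 := by
        intro i
        have := congrFun (congrArg Prod.fst hc) i
        simpa [hψ] using this
      have hprod := h c hc1 hc2
      have hvne : (∏ j, (v j) ^ c j) ≠ 0 := by
        apply Finset.prod_ne_zero_iff.mpr
        intro j _
        by_cases hj : v j = 0
        · rw [hc1 j hj, zpow_zero]; exact one_ne_zero
        · exact zpow_ne_zero _ hj
      have huval : ((∏ j, u j ^ c j : ℂˣ) : ℂ) = (∏ j, (w j) ^ c j) / (∏ j, (v j) ^ c j) := by
        push_cast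
        rw [← Finset.prod_div_distrib]
        apply Finset.prod_congr rfl
        intro j _
        by_cases hj : v j = 0
        · rw [hc1 j hj]
          simp [hu, hj]
        · simp only [hu, dif_neg hj, Units.val_zpow_eq_zpow_val, Units.val_mk0, div_zpow]
      have : ((∏ j, u j ^ c j : ℂˣ) : ℂ) = 1 := by
        rw [huval, ← hprod, div_self hvne]
      have hone : (∏ j, u j ^ c j : ℂˣ) = 1 := Units.ext (by simpa using this)
      show Additive.ofMul (∏ j, u j ^ c j) = 0
      rw [hone]; rfl
    -- extend along the injective map induced by ψ
    obtain ⟨g, hg⟩ := (Module.Baer.of_divisible (Additive ℂˣ)).extension_property_addMonoidHom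
      (QuotientAddGroup.kerLift ψ) (QuotientAddGroup.kerLift_injective ψ)
      (QuotientAddGroup.lift ψ.ker F (by
        intro c hc
        rw [AddMonoidHom.mem_ker]
        exact hker c hc))
    have hgψ : ∀ c : Fin n → ℤ, g (ψ c) = F c := by
      intro c
      have h1 : (QuotientAddGroup.kerLift ψ) (QuotientAddGroup.mk c) = ψ c :=
        QuotientAddGroup.kerLift_mk ψ c
      have := congrFun (congrArg DFunLike.coe hg) (QuotientAddGroup.mk c)
      simpa [h1] using this
    set t : Fin d → ℂˣ := fun i => Additive.toMul (g (Pi.single i 1, 0)) with ht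
    have hkey : ∀ j, v j ≠ 0 → (∏ i, t i ^ M i j : ℂˣ) = u j := by
      intro j hj
      have hcol : ((fun i => M i j, 0) : (Fin d → ℤ) × (Fin n → ℤ)) = ψ (Pi.single j 1) := by
        ext i
        · simp only [hψ, AddMonoidHom.coe_mk, ZeroHom.coe_mk]
          rw [Finset.sum_eq_single j]
          · simp
          · intro j' _ hj'
            simp [Pi.single_eq_of_ne hj']
          · simp
        · simp only [hψ, AddMonoidHom.coe_mk, ZeroHom.coe_mk]
          split
          · rename_i hvj'
            have : _ ≠ j := fun h => hj (h ▸ hvj')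
            simp [Pi.single_eq_of_ne this]
          · rfl
      have hdecomp : ((fun i => M i j, 0) : (Fin d → ℤ) × (Fin n → ℤ)) =
          ∑ i, (M i j) • ((Pi.single i 1, 0) : (Fin d → ℤ) × (Fin n → ℤ)) := by
        ext i'
        · simp only [Prod.fst_sum, Prod.smul_fst]
          rw [show (∑ i, (M i j) • Pi.single i (1 : ℤ)) = ∑ i, Pi.single i (M i j) by
            apply Finset.sum_congr rfl
            intro i _
            rw [← Pi.single_smul, smul_eq_mul, mul_one]]
          rw [Finset.univ_sum_single (fun i => M i j)]
        · rw [Prod.snd_sum]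
          simp
      have hFe : F (Pi.single j 1) = Additive.ofMul (u j) := by
        simp only [hF, AddMonoidHom.coe_mk, ZeroHom.coe_mk]
        congr 1
        rw [Finset.prod_eq_single j]
        · simp
        · intro j' _ hj'
          simp [Pi.single_eq_of_ne hj']
        · simp
      have hadd : g ((fun i => M i j, 0)) = Additive.ofMul (u j) := by
        rw [hcol, hgψ, hFe]
      have hsum : g ((fun i => M i j, 0)) = ∑ i, (M i j) • g (Pi.single i 1, 0) := by
        rw [hdecomp, map_sum]
        exact Finset.sum_congr rfl fun i _ => map_zsmul g _ _
      calc (∏ i, t i ^ M i j : ℂˣ)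
          = ∏ i, Additive.toMul ((M i j) • g (Pi.single i 1, 0)) := by
            apply Finset.prod_congr rfl
            intro i _
            exact (toMul_zsmul _ _).symm
        _ = Additive.toMul (∑ i, (M i j) • g (Pi.single i 1, 0)) := (toMul_sum _ _).symm
        _ = u j := by rw [← hsum, hadd]; rfl
    have hact : w = torusAct M t v := by
      funext j
      by_cases hj : v j = 0
      · rw [(hvw j).mp hj]
        simp [torusAct, hj]
      · have h1 : (∏ i, (t i : ℂ) ^ M i j) = ((∏ i, t i ^ M i j : ℂˣ) : ℂ) := by
          push_cast
          rfl
        rw [torusAct, h1, hkey j hj]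
        simp only [hu, dif_neg hj, Units.val_mk0]
        exact (div_mul_cancel₀ (w j) hj).symm
    exact torusOrbit_eq_of_act M t hact
  · -- separating monomial → orbits differ
    rintro ⟨c, hc1, hc2, hc3⟩ heq
    apply hc3
    have hwmem : w ∈ torusOrbit M v := by
      rw [heq]
      exact ⟨1, by funext j; simp [torusAct]⟩
    obtain ⟨t, htw⟩ := hwmem
    rw [htw]
    have hA : (∏ j, (∏ i, t i ^ M i j) ^ c j : ℂˣ) = 1 := by
      calc (∏ j, (∏ i, t i ^ M i j) ^ c j : ℂˣ)
          = ∏ j, ∏ i, t i ^ (M i j * c j) := by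
            apply Finset.prod_congr rfl
            intro j _
            rw [← Finset.prod_zpow]
            apply Finset.prod_congr rfl
            intro i _
            rw [zpow_mul]
        _ = ∏ i, ∏ j, t i ^ (M i j * c j) := Finset.prod_comm
        _ = ∏ i, t i ^ (∑ j, M i j * c j) := by
            apply Finset.prod_congr rfl
            intro i _
            induction (Finset.univ : Finset (Fin n)) using Finset.cons_induction with
            | empty => simp
            | cons a s ha ih => rw [Finset.prod_cons, Finset.sum_cons, zpow_add, ih]
        _ = 1 := by
            apply Finset.prod_eq_one
            intro i _
            have : (∑ j, M i j * c j) = 0 := by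
              rw [← hc2 i]
              apply Finset.sum_congr rfl
              intro j _
              ring
            rw [this, zpow_zero]
    have hAc : (∏ j, (∏ i, (t i : ℂ) ^ M i j) ^ c j) = 1 := by
      have := congrArg (Units.val) hA
      push_cast at this
      simpa using this
    calc ∏ j, (v j) ^ c j
        = 1 * ∏ j, (v j) ^ c j := (one_mul _).symm
      _ = (∏ j, (∏ i, (t i : ℂ) ^ M i j) ^ c j) * ∏ j, (v j) ^ c j := by rw [hAc]
      _ = ∏ j, ((∏ i, (t i : ℂ) ^ M i j) * v j) ^ c j := by
          rw [← Finset.prod_mul_distrib]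
          apply Finset.prod_congr rfl
          intro j _
          rw [mul_zpow]
      _ = ∏ j, (torusAct M t v j) ^ c j := rfl
end
end

section
/- Two orbit closures of a torus action intersect, closure(O_v) ∩ closure(O_w) ≠ ∅, if and only if O_{ṽ} = O_{w̃}, where ṽ = v|_{esupp(v)} and w̃ = w|_{esupp(w)} are the restrictions to the essential supports. -/
open scoped BigOperators

noncomputable section

namespace TorusAux

open Filter Topology Set

variable {d n : ℕ} (M : Matrix (Fin d) (Fin n) ℤ)

/-- the `j`-th column of `M` as a real vector -/
def mcol (j : Fin n) : Fin d → ℝ := fun i => (M i j : ℝ)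

/-- the character associated to column `j`, valued in units -/
def chi (t : Fin d → ℂˣ) (j : Fin n) : ℂˣ := ∏ i, (t i) ^ (M i j)

variable {M}

lemma chi_val (t : Fin d → ℂˣ) (j : Fin n) :
    ((chi M t j : ℂˣ) : ℂ) = ∏ i, (t i : ℂ) ^ M i j := by
  simp [chi]

lemma torusAct_apply (t : Fin d → ℂˣ) (v : Fin n → ℂ) (j : Fin n) :
    torusAct M t v j = (chi M t j : ℂ) * v j := by
  rw [torusAct, chi_val]

lemma torusAct_one (v : Fin n → ℂ) : torusAct M 1 v = v := by
  funext j; simp [torusAct]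

lemma torusAct_mul (t s : Fin d → ℂˣ) (v : Fin n → ℂ) :
    torusAct M t (torusAct M s v) = torusAct M (t * s) v := by
  funext j
  simp only [torusAct, Pi.mul_apply]
  rw [← mul_assoc, ← Finset.prod_mul_distrib]
  congr 1
  refine Finset.prod_congr rfl fun i _ => ?_
  rw [Units.val_mul, mul_zpow]

lemma mem_orbit_self (v : Fin n → ℂ) : v ∈ torusOrbit M v :=
  ⟨1, (torusAct_one v).symm⟩

lemma orbit_eq_of_mem {u v : Fin n → ℂ} (h : u ∈ torusOrbit M v) :
    torusOrbit M u = torusOrbit M v := by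
  obtain ⟨t, rfl⟩ := h
  ext w
  constructor
  · rintro ⟨s, rfl⟩
    exact ⟨s * t, by rw [torusAct_mul]⟩
  · rintro ⟨s, rfl⟩
    exact ⟨s * t⁻¹, by rw [torusAct_mul, mul_assoc, inv_mul_cancel, mul_one]⟩

lemma torusAct_eq_zero_iff (t : Fin d → ℂˣ) (v : Fin n → ℂ) (j : Fin n) :
    torusAct M t v j = 0 ↔ v j = 0 := by
  rw [torusAct_apply]
  simp [Units.ne_zero]

lemma continuous_torusAct (t : Fin d → ℂˣ) : Continuous (torusAct M t) := by
  refine continuous_pi fun j => ?_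
  exact (continuous_const.mul (continuous_apply j))

/-! ### basic cone lemmas -/

lemma mcol_mem_newtonCone {v : Fin n → ℂ} {j : Fin n} (hj : v j ≠ 0) :
    mcol M j ∈ newtonCone M v := by
  classical
  refine ⟨fun l => if l = j then 1 else 0, fun l => by positivity, fun l hl => ?_, ?_⟩
  · by_cases h : l = j
    · exact absurd (h ▸ hl) hj
    · simp [h]
  · funext i
    rw [Finset.sum_apply, Finset.sum_eq_single j]
    · simp [mcol]
    · intro b _ hb; simp [hb]
    · intro h; exact absurd (Finset.mem_univ j) h

lemma newtonCone_zero_mem (v : Fin n → ℂ) : (0 : Fin d → ℝ) ∈ newtonCone M v :=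
  ⟨0, fun _ => le_rfl, fun _ _ => rfl, by simp⟩

lemma newtonCone_add_mem {v : Fin n → ℂ} {x y : Fin d → ℝ}
    (hx : x ∈ newtonCone M v) (hy : y ∈ newtonCone M v) : x + y ∈ newtonCone M v := by
  obtain ⟨c, hc0, hcs, rfl⟩ := hx
  obtain ⟨e, he0, hes, rfl⟩ := hy
  refine ⟨c + e, fun j => add_nonneg (hc0 j) (he0 j),
    fun j hj => by simp [hcs j hj, hes j hj], ?_⟩
  rw [← Finset.sum_add_distrib]
  refine Finset.sum_congr rfl fun j _ => ?_
  simp [add_smul]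

lemma newtonCone_smul_mem {v : Fin n → ℂ} {x : Fin d → ℝ} {r : ℝ} (hr : 0 ≤ r)
    (hx : x ∈ newtonCone M v) : r • x ∈ newtonCone M v := by
  obtain ⟨c, hc0, hcs, rfl⟩ := hx
  refine ⟨r • c, fun j => mul_nonneg hr (hc0 j), fun j hj => by simp [hcs j hj], ?_⟩
  rw [Finset.smul_sum]
  refine Finset.sum_congr rfl fun j _ => ?_
  simp [smul_smul]

lemma newtonCone_convex (v : Fin n → ℂ) : Convex ℝ (newtonCone M v) := by
  intro x hx y hy a b ha hb _
  exact newtonCone_add_mem (newtonCone_smul_mem ha hx) (newtonCone_smul_mem hb hy)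

lemma newtonCone_mono {u v : Fin n → ℂ} (h : ∀ j, v j = 0 → u j = 0) :
    newtonCone M u ⊆ newtonCone M v := by
  rintro x ⟨c, hc0, hcs, rfl⟩
  exact ⟨c, hc0, fun j hj => hcs j (h j hj), rfl⟩

end TorusAux

/-! ### Carathéodory and closedness of the Newton cone -/

namespace TorusAux

open Filter Topology Set

variable {d n : ℕ} {M : Matrix (Fin d) (Fin n) ℤ}

variable (M) in
/-- cone generated by the columns indexed by a finset -/
def coneOn (S : Finset (Fin n)) : Set (Fin d → ℝ) :=
  {y | ∃ c : Fin n → ℝ, (∀ j, 0 ≤ c j) ∧ (∀ j ∉ S, c j = 0) ∧ y = ∑ j, c j • mcol M j}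

lemma carath_aux : ∀ (N : ℕ) (c : Fin n → ℝ),
    (Finset.univ.filter fun j => c j ≠ 0).card ≤ N → (∀ j, 0 ≤ c j) →
    ∃ c' : Fin n → ℝ, (∀ j, 0 ≤ c' j) ∧ (∀ j, c' j ≠ 0 → c j ≠ 0) ∧
      (∑ j, c' j • mcol M j) = ∑ j, c j • mcol M j ∧
      LinearIndependent ℝ
        (fun j : (Finset.univ.filter fun j => c' j ≠ 0 : Finset (Fin n)) => mcol M (j : Fin n)) := by
  classical
  intro N
  induction N with
  | zero =>
    intro c hcard hc0
    refine ⟨c, hc0, fun j h => h, rfl, ?_⟩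
    have : (Finset.univ.filter fun j => c j ≠ 0) = ∅ := Finset.card_eq_zero.mp (le_antisymm hcard (Nat.zero_le _))
    have : IsEmpty ((Finset.univ.filter fun j => c j ≠ 0 : Finset (Fin n)) : Type) :=
      Finset.isEmpty_coe_sort.mpr this
    exact linearIndependent_empty_type
  | succ N ih =>
    intro c hcard hc0
    by_cases H : LinearIndependent ℝ
        (fun j : (Finset.univ.filter fun j => c j ≠ 0 : Finset (Fin n)) => mcol M (j : Fin n))
    · exact ⟨c, hc0, fun j h => h, rfl, H⟩
    obtain ⟨a, ha, i₁, hi₁⟩ := Fintype.not_linearIndependent_iff.mp H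
    -- extend `a` to all of `Fin n` by zero
    set A : Fin n → ℝ := fun j =>
      if h : j ∈ (Finset.univ.filter fun j => c j ≠ 0) then a ⟨j, h⟩ else 0 with hA
    have hAsum : ∑ j, A j • mcol M j = 0 := by
      rw [← Finset.sum_subset (Finset.subset_univ (Finset.univ.filter fun j => c j ≠ 0))
        (by intro x _ hx; rw [hA]; simp [hx])]
      rw [← Finset.sum_coe_sort (Finset.univ.filter fun j => c j ≠ 0) (fun j => A j • mcol M j)]
      rw [← ha]
      refine Finset.sum_congr rfl ?_
      rintro ⟨i, hi⟩ _
      have hci : c i ≠ 0 := by simpa using hi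
      simp [hA, hci]
    have hAsupp : ∀ j, A j ≠ 0 → c j ≠ 0 := by
      intro j hj
      by_contra hc
      apply hj
      rw [hA]
      simp [hc]
    have hAex : ∃ j, A j ≠ 0 := by
      refine ⟨i₁, ?_⟩
      rw [hA]
      simpa [i₁.2] using hi₁
    -- WLOG there is a positive entry
    obtain ⟨B, hBsum, hBsupp, j₂, hj₂⟩ :
        ∃ B : Fin n → ℝ, (∑ j, B j • mcol M j = 0) ∧ (∀ j, B j ≠ 0 → c j ≠ 0) ∧ ∃ j, 0 < B j := by
      obtain ⟨j, hj⟩ := hAex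
      rcases lt_or_gt_of_ne hj with h | h
      · refine ⟨-A, ?_, fun j hj => hAsupp j (by simpa using hj), j, by simpa using h⟩
        simp only [Pi.neg_apply, neg_smul, Finset.sum_neg_distrib, hAsum, neg_zero]
      · exact ⟨A, hAsum, hAsupp, j, h⟩
    set T := Finset.univ.filter fun j => 0 < B j with hT
    have hTne : T.Nonempty := ⟨j₂, by simp [hT, hj₂]⟩
    obtain ⟨j₀, hj₀T, hj₀min⟩ := Finset.exists_min_image T (fun j => c j / B j) hTne
    have hBj₀ : 0 < B j₀ := by simpa [hT] using hj₀T
    set r := c j₀ / B j₀ with hr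
    have hr0 : 0 ≤ r := div_nonneg (hc0 j₀) hBj₀.le
    set c' : Fin n → ℝ := fun j => c j - r * B j with hc'
    have hc'0 : ∀ j, 0 ≤ c' j := by
      intro j
      rcases le_or_gt (B j) 0 with h | h
      · have : r * B j ≤ 0 := mul_nonpos_of_nonneg_of_nonpos hr0 h
        simp only [hc']
        linarith [hc0 j]
      · have hjT : j ∈ T := by simp [hT, h]
        have h2 := hj₀min j hjT
        rw [div_le_div_iff₀ hBj₀ h] at h2
        have h3 : r * B j ≤ c j := by
          rw [hr, div_mul_eq_mul_div, div_le_iff₀ hBj₀]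
          linarith
        simp only [hc']
        linarith
    have hc'supp : ∀ j, c' j ≠ 0 → c j ≠ 0 := by
      intro j hj
      by_contra hc
      apply hj
      have hB : B j = 0 := by
        by_contra hB
        exact hBsupp j hB hc
      simp [hc', hc, hB]
    have hc'j₀ : c' j₀ = 0 := by
      simp only [hc', hr]
      field_simp
      ring
    have hsum : ∑ j, c' j • mcol M j = ∑ j, c j • mcol M j := by
      simp only [hc', sub_smul, Finset.sum_sub_distrib, mul_smul]
      rw [← Finset.smul_sum, hBsum, smul_zero, sub_zero]
    have hcj₀ : c j₀ ≠ 0 := hBsupp j₀ hBj₀.ne'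
    have hsub : (Finset.univ.filter fun j => c' j ≠ 0) ⊆
        (Finset.univ.filter fun j => c j ≠ 0).erase j₀ := by
      intro j hj
      simp only [Finset.mem_filter, Finset.mem_univ, true_and] at hj
      refine Finset.mem_erase.mpr ⟨?_, by simp [hc'supp j hj]⟩
      rintro rfl
      exact hj hc'j₀
    have hcard' : (Finset.univ.filter fun j => c' j ≠ 0).card ≤ N := by
      have h1 := Finset.card_le_card hsub
      rw [Finset.card_erase_of_mem (by simp [hcj₀])] at h1
      omega
    obtain ⟨c'', h1, h2, h3, h4⟩ := ih c' hcard' hc'0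
    exact ⟨c'', h1, fun j h => hc'supp j (h2 j h), h3.trans hsum, h4⟩

lemma newtonCone_eq_union (v : Fin n → ℂ) :
    newtonCone M v = ⋃ S ∈ {S : Finset (Fin n) |
      (↑S ⊆ {j | v j ≠ 0}) ∧ LinearIndependent ℝ (fun j : S => mcol M (j : Fin n))},
      coneOn M S := by
  classical
  ext x
  simp only [Set.mem_iUnion, Set.mem_setOf_eq]
  constructor
  · rintro ⟨c, hc0, hcs, rfl⟩
    obtain ⟨c', h1, h2, h3, h4⟩ := carath_aux (Finset.univ.filter fun j => c j ≠ 0).card c le_rfl hc0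
    refine ⟨Finset.univ.filter fun j => c' j ≠ 0, ⟨?_, h4⟩, c', h1, ?_, h3.symm⟩
    · intro j hj
      simp only [Finset.coe_filter, Set.mem_setOf_eq] at hj
      intro hv
      exact h2 j hj.2 (hcs j hv)
    · intro j hj
      simp only [Finset.mem_filter, Finset.mem_univ, true_and, not_not] at hj
      exact hj
  · rintro ⟨S, ⟨hS, _⟩, c, hc0, hcs, rfl⟩
    refine ⟨c, hc0, fun j hj => ?_, rfl⟩
    refine hcs j fun hjS => ?_
    exact hS hjS hj

lemma coneOn_isClosed (S : Finset (Fin n))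
    (h : LinearIndependent ℝ (fun j : S => mcol M (j : Fin n))) : IsClosed (coneOn M S) := by
  classical
  set Φ : (S → ℝ) →ₗ[ℝ] (Fin d → ℝ) :=
    Fintype.linearCombination ℝ (fun j : S => mcol M (j : Fin n)) with hΦ
  have hΦa : ∀ b : S → ℝ, Φ b = ∑ j : S, b j • mcol M (j : Fin n) := by
    intro b
    simp [hΦ, Fintype.linearCombination_apply]
  have hker : LinearMap.ker Φ = ⊥ := by
    rw [LinearMap.ker_eq_bot']
    intro b hb
    rw [hΦa] at hb
    funext i
    exact Fintype.linearIndependent_iff.mp h b hb i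
  have himg : coneOn M S = Φ '' {b : S → ℝ | ∀ j, 0 ≤ b j} := by
    ext x
    constructor
    · rintro ⟨c, hc0, hcs, rfl⟩
      refine ⟨fun j => c j, fun j => hc0 j, ?_⟩
      rw [hΦa]
      rw [Finset.sum_coe_sort S (fun j => c j • mcol M j)]
      refine Finset.sum_subset (Finset.subset_univ S) fun x _ hx => ?_
      rw [hcs x hx, zero_smul]
    · rintro ⟨b, hb, rfl⟩
      refine ⟨fun j => if hj : j ∈ S then b ⟨j, hj⟩ else 0, fun j => ?_, fun j hj => by simp [hj], ?_⟩
      · by_cases hj : j ∈ S <;> simp [hj, hb _]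
      · rw [hΦa]
        rw [← Finset.sum_subset (Finset.subset_univ S) (fun x _ hx => by simp [hx])]
        rw [← Finset.sum_coe_sort S
          (fun j => (if hj : j ∈ S then b ⟨j, hj⟩ else 0) • mcol M j)]
        refine Finset.sum_congr rfl fun i _ => ?_
        simp [i.2]
  rw [himg]
  have hclosed : IsClosed {b : S → ℝ | ∀ j, 0 ≤ b j} := by
    have : {b : S → ℝ | ∀ j, 0 ≤ b j} = ⋂ j, {b : S → ℝ | 0 ≤ b j} := by
      ext b; simp [Set.mem_iInter]
    rw [this]
    exact isClosed_iInter fun j => isClosed_le continuous_const (continuous_apply j)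
  exact (Φ.isClosedEmbedding_of_injective hker).isClosedMap _ hclosed

lemma newtonCone_isClosed (v : Fin n → ℂ) : IsClosed (newtonCone M v) := by
  rw [newtonCone_eq_union]
  exact Set.Finite.isClosed_biUnion (Set.toFinite _) fun S hS => coneOn_isClosed S hS.2

/-- Farkas-type separation: a vector outside the Newton cone can be separated by a
continuous linear functional which is nonpositive on the cone. -/
lemma exists_separating {v : Fin n → ℂ} {x : Fin d → ℝ} (hx : x ∉ newtonCone M v) :
    ∃ f : (Fin d → ℝ) →L[ℝ] ℝ, (∀ y ∈ newtonCone M v, f y ≤ 0) ∧ 0 < f x := by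
  obtain ⟨f, u, hfu, hux⟩ :=
    geometric_hahn_banach_closed_point (newtonCone_convex v) (newtonCone_isClosed v) hx
  have hu0 : 0 < u := by
    have := hfu 0 (newtonCone_zero_mem v)
    simpa using this
  refine ⟨f, fun y hy => ?_, hu0.trans hux⟩
  by_contra hfy
  push_neg at hfy
  have hky : ((u + 1) / f y) • y ∈ newtonCone M v :=
    newtonCone_smul_mem (div_nonneg (by linarith) hfy.le) hy
  have := hfu _ hky
  rw [map_smul, smul_eq_mul, div_mul_cancel₀ _ hfy.ne'] at this
  linarith

end TorusAux

/-! ### the essential restriction lies in the orbit closure -/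

namespace TorusAux

open Filter Topology Set

variable {d n : ℕ} {M : Matrix (Fin d) (Fin n) ℤ}

lemma exists_functional (v : Fin n → ℂ) :
    ∃ F : (Fin d → ℝ) →L[ℝ] ℝ, (∀ j ∈ esupp M v, F (mcol M j) = 0) ∧
      (∀ j, v j ≠ 0 → j ∉ esupp M v → F (mcol M j) < 0) := by
  classical
  set bad : Finset (Fin n) := Finset.univ.filter (fun j => v j ≠ 0 ∧ j ∉ esupp M v) with hbad
  have hsep : ∀ j₀ ∈ bad, ∃ f : (Fin d → ℝ) →L[ℝ] ℝ,
      (∀ y ∈ newtonCone M v, f y ≤ 0) ∧ f (mcol M j₀) < 0 := by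
    intro j₀ hj₀
    simp only [hbad, Finset.mem_filter, Finset.mem_univ, true_and] at hj₀
    have hnot : -mcol M j₀ ∉ newtonCone M v := by
      intro hmem
      exact hj₀.2 ⟨hj₀.1, mcol_mem_newtonCone hj₀.1, by exact Set.mem_neg.mpr hmem⟩
    obtain ⟨f, hf1, hf2⟩ := exists_separating hnot
    refine ⟨f, hf1, ?_⟩
    rw [map_neg] at hf2
    linarith
  choose f hf1 hf2 using hsep
  refine ⟨∑ j₀ ∈ bad.attach, f j₀ j₀.2, ?_, ?_⟩
  · intro j hj
    have h1 : ∀ j₀ ∈ bad.attach, f j₀ j₀.2 (mcol M j) = 0 := by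
      intro j₀ _
      have ha : f j₀ j₀.2 (mcol M j) ≤ 0 := hf1 j₀ j₀.2 (mcol M j) hj.2.1
      have hb := hf1 j₀ j₀.2 (-mcol M j) (by exact Set.mem_neg.mp hj.2.2)
      rw [map_neg] at hb
      linarith
    rw [ContinuousLinearMap.sum_apply]
    exact Finset.sum_eq_zero h1
  · intro j hvj hj
    have hjbad : j ∈ bad := by simp [hbad, hvj, hj]
    rw [ContinuousLinearMap.sum_apply]
    have : ∑ j₀ ∈ bad.attach, f j₀ j₀.2 (mcol M j) < ∑ _j₀ ∈ bad.attach, (0 : ℝ) := by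
      refine Finset.sum_lt_sum (fun j₀ _ => hf1 j₀ j₀.2 _ (mcol_mem_newtonCone hvj)) ?_
      exact ⟨(⟨j, hjbad⟩ : {x // x ∈ bad}), Finset.mem_attach _ _, hf2 j hjbad⟩
    simpa using this

lemma tilde_mem_closure (v : Fin n → ℂ) :
    (esupp M v).indicator v ∈ closure (torusOrbit M v) := by
  classical
  obtain ⟨F, hF0, hFneg⟩ := exists_functional (M := M) v
  set lam : Fin d → ℝ := fun i => F (Pi.single i 1) with hlam
  have hrep : ∀ x : Fin d → ℝ, F x = ∑ i, x i * lam i := by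
    intro x
    conv_lhs => rw [pi_eq_sum_univ x]
    rw [map_sum]
    refine Finset.sum_congr rfl fun i _ => ?_
    rw [map_smul, smul_eq_mul, hlam]
    congr 1
    congr 1
    funext i'
    simp [Pi.single_apply, eq_comm]
  set t : ℕ → Fin d → ℂˣ := fun k i =>
    Units.mk0 (Complex.exp ((k * lam i : ℝ) : ℂ)) (Complex.exp_ne_zero _) with ht
  have hchi : ∀ k j, ((chi M (t k) j : ℂˣ) : ℂ) = Complex.exp (((k : ℝ) * F (mcol M j) : ℝ) : ℂ) := by
    intro k j
    rw [chi_val]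
    have : ∀ i, ((t k i : ℂ)) ^ (M i j) = Complex.exp ((M i j : ℂ) * ((k * lam i : ℝ) : ℂ)) := by
      intro i
      rw [ht]
      simp only [Units.val_mk0]
      rw [Complex.exp_int_mul]
    simp only [this]
    rw [← Complex.exp_sum]
    congr 1
    rw [hrep (mcol M j)]
    push_cast
    rw [Finset.mul_sum]
    refine Finset.sum_congr rfl fun i _ => ?_
    simp [mcol]
    ring
  have hmem : ∀ k, torusAct M (t k) v ∈ torusOrbit M v := fun k => ⟨t k, rfl⟩
  refine mem_closure_of_tendsto (b := atTop) ?_ (Filter.Eventually.of_forall hmem)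
  rw [tendsto_pi_nhds]
  intro j
  by_cases hj : j ∈ esupp M v
  · have h0 : F (mcol M j) = 0 := hF0 j hj
    have : ∀ k, torusAct M (t k) v j = v j := by
      intro k
      rw [torusAct_apply, hchi, h0]
      simp
    simp only [this]
    rw [Set.indicator_of_mem hj]
    exact tendsto_const_nhds
  · rw [Set.indicator_of_notMem hj]
    by_cases hvj : v j = 0
    · have : ∀ k, torusAct M (t k) v j = 0 := by
        intro k
        rw [torusAct_apply, hvj, mul_zero]
      simp only [this]
      exact tendsto_const_nhds
    · have hneg := hFneg j hvj hj
      have hexp : Tendsto (fun k : ℕ => Complex.exp (((k : ℝ) * F (mcol M j) : ℝ) : ℂ))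
          atTop (𝓝 0) := by
        rw [tendsto_zero_iff_norm_tendsto_zero]
        simp only [Complex.norm_exp, Complex.ofReal_re]
        exact Real.tendsto_exp_atBot.comp
          ((tendsto_natCast_atTop_atTop).atTop_mul_const_of_neg hneg)
      have : Tendsto (fun k => torusAct M (t k) v j) atTop (𝓝 (0 * v j)) := by
        refine Filter.Tendsto.mul_const (v j) ?_
        simp only [← chi_val, hchi]
        exact hexp
      simpa using this

lemma act_mem_closure_orbit {x w : Fin n → ℂ} (t : Fin d → ℂˣ)
    (hx : x ∈ closure (torusOrbit M w)) : torusAct M t x ∈ closure (torusOrbit M w) := by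
  have h1 : torusAct M t x ∈ torusAct M t '' closure (torusOrbit M w) := ⟨x, hx, rfl⟩
  have h2 := image_closure_subset_closure_image (s := torusOrbit M w) (continuous_torusAct t) h1
  refine closure_mono ?_ h2
  rintro y ⟨z, ⟨s, rfl⟩, rfl⟩
  exact ⟨t * s, by rw [torusAct_mul]⟩

end TorusAux

/-! ### points of the orbit closure: support and essential support -/

namespace TorusAux

open Filter Topology Set

variable {d n : ℕ} {M : Matrix (Fin d) (Fin n) ℤ}

lemma abs_chi (t : Fin d → ℂˣ) (j : Fin n) :
    ‖((chi M t j : ℂˣ) : ℂ)‖ =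
      Real.exp (∑ i, mcol M j i * Real.log ‖(t i : ℂ)‖) := by
  rw [chi_val, norm_prod, Real.exp_sum]
  refine Finset.prod_congr rfl fun i _ => ?_
  rw [norm_zpow]
  have h : (0:ℝ) < ‖(t i : ℂ)‖ := norm_pos_iff.mpr (Units.ne_zero (t i))
  have h2 : ‖(t i : ℂ)‖ ^ (M i j) =
      Real.exp ((M i j : ℝ) * Real.log ‖(t i : ℂ)‖) := by
    rw [← Real.log_zpow, Real.exp_log (zpow_pos h _)]
  rw [h2]
  rfl

lemma limit_supp_subset {u v : Fin n → ℂ} {t : ℕ → Fin d → ℂˣ}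
    (hconv : Tendsto (fun k => torusAct M (t k) v) atTop (𝓝 u)) {j : Fin n}
    (hvj : v j = 0) : u j = 0 := by
  have h := (tendsto_pi_nhds.mp hconv) j
  have h2 : ∀ k, torusAct M (t k) v j = 0 := fun k => by rw [torusAct_apply, hvj, mul_zero]
  simp only [h2] at h
  exact tendsto_nhds_unique h tendsto_const_nhds

lemma limit_ne_zero_on_esupp {u v : Fin n → ℂ} {t : ℕ → Fin d → ℂˣ}
    (hconv : Tendsto (fun k => torusAct M (t k) v) atTop (𝓝 u)) {j : Fin n}
    (hj : j ∈ esupp M v) : u j ≠ 0 := by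
  classical
  obtain ⟨hvj, hjC, hjnegC⟩ := hj
  have hneg : -(mcol M j) ∈ newtonCone M v := by exact Set.mem_neg.mp hjnegC
  obtain ⟨c, hc0, hcs, hcsum⟩ := hneg
  set g : ℕ → Fin d → ℝ := fun k i => Real.log ‖(t k i : ℂ)‖ with hg
  -- upper bounds on the weighted log-sums
  have hQ : ∀ l, ∃ Q : ℝ, ∀ k, c l * (∑ i, mcol M l i * g k i) ≤ c l * Q := by
    intro l
    by_cases hcl : c l = 0
    · exact ⟨0, fun k => by simp [hcl]⟩
    · have hvl : v l ≠ 0 := fun h => hcl (hcs l h)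
      have hconvl := (tendsto_pi_nhds.mp hconv) l
      have habs : Tendsto (fun k => ‖torusAct M (t k) v l‖) atTop
          (𝓝 ‖u l‖) := (continuous_norm.tendsto _).comp hconvl
      obtain ⟨D, hD⟩ := habs.bddAbove_range
      have hD' : ∀ k, ‖torusAct M (t k) v l‖ ≤ D := fun k =>
        hD (Set.mem_range_self k)
      have hvl' : (0:ℝ) < ‖v l‖ := norm_pos_iff.mpr hvl
      refine ⟨Real.log (D / ‖v l‖), fun k => ?_⟩
      refine mul_le_mul_of_nonneg_left ?_ (hc0 l)
      have hexp : Real.exp (∑ i, mcol M l i * g k i) ≤ D / ‖v l‖ := by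
        rw [le_div_iff₀ hvl']
        have := hD' k
        rw [torusAct_apply, norm_mul, abs_chi] at this
        exact this
      have hpos : (0:ℝ) < D / ‖v l‖ :=
        lt_of_lt_of_le (Real.exp_pos _) hexp
      rw [Real.le_log_iff_exp_le hpos]
      exact hexp
  choose Q hQmain using hQ
  set K : ℝ := ∑ l, c l * Q l with hK
  -- the key lower bound
  have hlow : ∀ k, Real.exp (-K) * ‖v j‖ ≤ ‖torusAct M (t k) v j‖ := by
    intro k
    rw [torusAct_apply, norm_mul, abs_chi]
    refine mul_le_mul_of_nonneg_right ?_ (norm_nonneg _)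
    rw [Real.exp_le_exp]
    -- identity: ∑ i, mcol M j i * g k i = -∑ l, c l * ∑ i, mcol M l i * g k i
    have h1 : ∀ i, -(mcol M j i) = ∑ l, c l * mcol M l i := by
      intro i
      have h0 := congrFun hcsum i
      simpa [mcol, Finset.sum_apply] using h0
    have h2 : ∀ i, mcol M j i * g k i = -∑ l, c l * (mcol M l i * g k i) := by
      intro i
      have h3 : mcol M j i = -∑ l, c l * mcol M l i := by
        rw [← h1 i, neg_neg]
      rw [h3, neg_mul, Finset.sum_mul]
      congr 1
      exact Finset.sum_congr rfl fun l _ => (mul_assoc _ _ _)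
    have hid : ∑ i, mcol M j i * g k i = -∑ l, c l * ∑ i, mcol M l i * g k i := by
      calc ∑ i, mcol M j i * g k i
          = ∑ i, -∑ l, c l * (mcol M l i * g k i) :=
            Finset.sum_congr rfl fun i _ => h2 i
        _ = -∑ i, ∑ l, c l * (mcol M l i * g k i) := by
            rw [Finset.sum_neg_distrib]
        _ = -∑ l, ∑ i, c l * (mcol M l i * g k i) := by rw [Finset.sum_comm]
        _ = -∑ l, c l * ∑ i, mcol M l i * g k i := by
            congr 1
            exact Finset.sum_congr rfl fun l _ => (Finset.mul_sum _ _ _).symm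
    rw [hid, neg_le_neg_iff, hK]
    exact Finset.sum_le_sum fun l _ => hQmain l k
  have hlim : Tendsto (fun k => ‖torusAct M (t k) v j‖) atTop
      (𝓝 ‖u j‖) :=
    (continuous_norm.tendsto _).comp ((tendsto_pi_nhds.mp hconv) j)
  have hfin : Real.exp (-K) * ‖v j‖ ≤ ‖u j‖ :=
    ge_of_tendsto' hlim hlow
  intro hu0
  rw [hu0] at hfin
  simp only [norm_zero] at hfin
  have : (0:ℝ) < Real.exp (-K) * ‖v j‖ :=
    mul_pos (Real.exp_pos _) (norm_pos_iff.mpr hvj)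
  linarith

/-- Face lemma: if `-x` lies in the Newton cone with coefficients `c`, and `x` itself is in the
cone, then every column with nonzero coefficient lies in the lineality space. -/
lemma face_lemma {v : Fin n → ℂ} {x : Fin d → ℝ} (hx : x ∈ newtonCone M v)
    {c : Fin n → ℝ} (hc0 : ∀ j, 0 ≤ c j) (hcs : ∀ j, v j = 0 → c j = 0)
    (hsum : -x = ∑ j, c j • mcol M j) {l : Fin n} (hcl : c l ≠ 0) :
    mcol M l ∈ lineality M v := by
  classical
  have hclpos : 0 < c l := lt_of_le_of_ne (hc0 l) (Ne.symm hcl)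
  have hvl : v l ≠ 0 := fun h => hcl (hcs l h)
  have hrest : (∑ j, Function.update c l 0 j • mcol M j) ∈ newtonCone M v := by
    refine ⟨Function.update c l 0, fun j => ?_, fun j hj => ?_, rfl⟩
    · rcases eq_or_ne j l with rfl | h
      · simp
      · simp [Function.update_of_ne h, hc0 j]
    · rcases eq_or_ne j l with rfl | h
      · simp
      · simp [Function.update_of_ne h, hcs j hj]
  have hsplit : (∑ j, c j • mcol M j)
      = c l • mcol M l + ∑ j, Function.update c l 0 j • mcol M j := by
    have hterm : ∀ j, c j • mcol M j
        = (if j = l then c l • mcol M l else 0) + Function.update c l 0 j • mcol M j := by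
      intro j
      rcases eq_or_ne j l with rfl | h
      · simp
      · rw [if_neg h, Function.update_of_ne h, zero_add]
    rw [Finset.sum_congr rfl fun j _ => hterm j, Finset.sum_add_distrib,
      Finset.sum_ite_eq' Finset.univ l (fun _ => c l • mcol M l)]
    simp
  set R := ∑ j, Function.update c l 0 j • mcol M j with hR
  have hxR : c l • (-(mcol M l)) = x + R := by
    have h3 : -x = c l • mcol M l + R := by rw [hsum, hsplit]
    have h4 : x = -(c l • mcol M l) - R := by
      have h5 := congrArg Neg.neg h3
      rw [neg_neg] at h5
      rw [h5, neg_add]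
      abel
    rw [smul_neg, h4]
    abel
  have hneg : -(mcol M l) ∈ newtonCone M v := by
    have h1 : (c l)⁻¹ • (x + R) ∈ newtonCone M v :=
      newtonCone_smul_mem (inv_nonneg.mpr (hc0 l)) (newtonCone_add_mem hx hrest)
    have h2 : (c l)⁻¹ • (x + R) = -(mcol M l) := by
      rw [← hxR, smul_smul, inv_mul_cancel₀ hcl, one_smul]
    rwa [h2] at h1
  exact ⟨mcol_mem_newtonCone hvl, by rwa [Set.mem_neg]⟩

end TorusAux

/-! ### essential support is preserved in the closure; binomial relations pass to the limit -/

namespace TorusAux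

open Filter Topology Set

variable {d n : ℕ} {M : Matrix (Fin d) (Fin n) ℤ}

lemma esupp_eq_of_closure {u v : Fin n → ℂ} {t : ℕ → Fin d → ℂˣ}
    (hconv : Tendsto (fun k => torusAct M (t k) v) atTop (𝓝 u)) :
    esupp M u = esupp M v := by
  have hsupp : ∀ j, v j = 0 → u j = 0 := fun j h => limit_supp_subset hconv h
  ext j
  constructor
  · rintro ⟨huj, hjC, hjnegC⟩
    have hvj : v j ≠ 0 := fun h => huj (hsupp j h)
    refine ⟨hvj, newtonCone_mono hsupp hjC, ?_⟩
    rw [Set.mem_neg] at hjnegC ⊢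
    exact newtonCone_mono hsupp hjnegC
  · rintro ⟨hvj, hjC, hjnegC⟩
    have huj : u j ≠ 0 := limit_ne_zero_on_esupp hconv ⟨hvj, hjC, hjnegC⟩
    refine ⟨huj, mcol_mem_newtonCone huj, ?_⟩
    rw [Set.mem_neg] at hjnegC ⊢
    obtain ⟨c, hc0, hcs, hcsum⟩ := hjnegC
    have hface := fun l (hl : c l ≠ 0) =>
      face_lemma (M := M) (v := v) hjC hc0 hcs hcsum (l := l) hl
    refine ⟨c, hc0, fun l hul => ?_, hcsum⟩
    by_contra hcl
    have hvl : v l ≠ 0 := fun h => hcl (hcs l h)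
    have hlmem : l ∈ esupp M v := ⟨hvl, hface l hcl⟩
    exact limit_ne_zero_on_esupp hconv hlmem hul

/-- a power helper -/
lemma zpow_finset_sum {β : Type*} (x : ℂˣ) (s : Finset β) (f : β → ℤ) :
    x ^ (∑ b ∈ s, f b) = ∏ b ∈ s, x ^ f b := by
  induction s using Finset.cons_induction with
  | empty => simp
  | cons a s ha ih => rw [Finset.sum_cons, Finset.prod_cons, zpow_add, ih]

lemma prod_zpow_distrib {β : Type*} (s : Finset β) (f : β → ℂˣ) (m : ℤ) :
    (∏ b ∈ s, f b) ^ m = ∏ b ∈ s, f b ^ m := by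
  induction s using Finset.cons_induction with
  | empty => simp
  | cons a s ha ih => rw [Finset.prod_cons, Finset.prod_cons, mul_zpow, ih]

lemma chi_relation (t : Fin d → ℂˣ) (a : Fin n → ℤ)
    (hrel : ∀ i, ∑ j, a j * M i j = 0) :
    ∏ j, (chi M t j) ^ (a j) = 1 := by
  have h1 : ∀ j, (chi M t j) ^ (a j) = ∏ i, (t i) ^ (M i j * a j) := by
    intro j
    rw [chi, prod_zpow_distrib]
    refine Finset.prod_congr rfl fun i _ => ?_
    rw [← zpow_mul]
  rw [Finset.prod_congr rfl fun j _ => h1 j, Finset.prod_comm]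
  refine Finset.prod_eq_one fun i _ => ?_
  rw [← zpow_finset_sum]
  have : ∑ j, M i j * a j = 0 := by
    rw [← hrel i]
    exact Finset.sum_congr rfl fun j _ => mul_comm _ _
  rw [this, zpow_zero]

lemma limit_relation {u v : Fin n → ℂ} {t : ℕ → Fin d → ℂˣ}
    (hconv : Tendsto (fun k => torusAct M (t k) v) atTop (𝓝 u))
    (a : Fin n → ℤ) (hrel : ∀ i, ∑ j, a j * M i j = 0) :
    ∏ j, (u j ^ (a j).toNat * v j ^ (-a j).toNat)
      = ∏ j, (u j ^ (-a j).toNat * v j ^ (a j).toNat) := by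
  have hk : ∀ k, ∏ j, (torusAct M (t k) v j ^ (a j).toNat * v j ^ (-a j).toNat)
      = ∏ j, (torusAct M (t k) v j ^ (-a j).toNat * v j ^ (a j).toNat) := by
    intro k
    have h1 := chi_relation (t k) a hrel
    have h2 : ∏ j, (chi M (t k) j) ^ (a j).toNat = ∏ j, (chi M (t k) j) ^ (-a j).toNat := by
      have h3 : ∀ j, (chi M (t k) j) ^ (a j)
          = (chi M (t k) j) ^ (a j).toNat / (chi M (t k) j) ^ (-a j).toNat := by
        intro j
        have hsplit : (a j) = ((a j).toNat : ℤ) - ((-a j).toNat : ℤ) := by omega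
        conv_lhs => rw [hsplit]
        rw [zpow_sub, zpow_natCast, zpow_natCast, div_eq_mul_inv]
      rw [Finset.prod_congr rfl fun j _ => h3 j, Finset.prod_div_distrib, div_eq_one] at h1
      exact h1
    have h4 : ∏ j, ((chi M (t k) j : ℂˣ) : ℂ) ^ (a j).toNat
        = ∏ j, ((chi M (t k) j : ℂˣ) : ℂ) ^ (-a j).toNat := by
      have := congrArg (Units.val) h2
      simpa [Units.val_pow_eq_pow_val] using this
    have hterm : ∀ (w : Fin n → ℂ) j, w j = (chi M (t k) j : ℂ) * v j →
        w j ^ (a j).toNat * v j ^ (-a j).toNat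
          = (chi M (t k) j : ℂ) ^ (a j).toNat * (v j ^ (a j).toNat * v j ^ (-a j).toNat) := by
      intro w j hw
      rw [hw]
      ring
    calc ∏ j, (torusAct M (t k) v j ^ (a j).toNat * v j ^ (-a j).toNat)
        = ∏ j, ((chi M (t k) j : ℂ) ^ (a j).toNat * (v j ^ (a j).toNat * v j ^ (-a j).toNat)) :=
          Finset.prod_congr rfl fun j _ => hterm _ j (torusAct_apply _ _ _)
      _ = (∏ j, ((chi M (t k) j : ℂ)) ^ (a j).toNat)
            * ∏ j, (v j ^ (a j).toNat * v j ^ (-a j).toNat) := Finset.prod_mul_distrib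
      _ = (∏ j, ((chi M (t k) j : ℂ)) ^ (-a j).toNat)
            * ∏ j, (v j ^ (a j).toNat * v j ^ (-a j).toNat) := by rw [h4]
      _ = ∏ j, ((chi M (t k) j : ℂ) ^ (-a j).toNat * (v j ^ (a j).toNat * v j ^ (-a j).toNat)) :=
          Finset.prod_mul_distrib.symm
      _ = ∏ j, (torusAct M (t k) v j ^ (-a j).toNat * v j ^ (a j).toNat) := by
          refine Finset.prod_congr rfl fun j _ => ?_
          rw [torusAct_apply]
          ring
  have hL : Tendsto (fun k => ∏ j, (torusAct M (t k) v j ^ (a j).toNat * v j ^ (-a j).toNat))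
      atTop (𝓝 (∏ j, (u j ^ (a j).toNat * v j ^ (-a j).toNat))) := by
    refine tendsto_finset_prod _ fun j _ => ?_
    exact (((tendsto_pi_nhds.mp hconv) j).pow _).mul_const _
  have hR : Tendsto (fun k => ∏ j, (torusAct M (t k) v j ^ (-a j).toNat * v j ^ (a j).toNat))
      atTop (𝓝 (∏ j, (u j ^ (-a j).toNat * v j ^ (a j).toNat))) := by
    refine tendsto_finset_prod _ fun j _ => ?_
    exact (((tendsto_pi_nhds.mp hconv) j).pow _).mul_const _
  exact tendsto_nhds_unique (hL.congr hk) hR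

end TorusAux

/-! ### the group-theoretic finale -/

namespace TorusAux

open Filter Topology Set

variable {d n : ℕ} {M : Matrix (Fin d) (Fin n) ℤ}

/-- integer vectors supported on `E` -/
def suppSub (E : Set (Fin n)) : Submodule ℤ (Fin n → ℤ) where
  carrier := {a | ∀ j ∉ E, a j = 0}
  add_mem' := fun ha hb j hj => by simp [ha j hj, hb j hj]
  zero_mem' := fun j _ => rfl
  smul_mem' := fun m a ha j hj => by simp [ha j hj]

lemma mem_suppSub {E : Set (Fin n)} {a : Fin n → ℤ} :
    a ∈ suppSub E ↔ ∀ j ∉ E, a j = 0 := Iff.rfl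

lemma exists_pow_root (z : ℂˣ) {p : ℕ} (hp : p ≠ 0) : ∃ r : ℂˣ, r ^ p = z := by
  obtain ⟨x, hx⟩ := IsAlgClosed.exists_pow_nat_eq ((z : ℂˣ) : ℂ) (Nat.pos_of_ne_zero hp)
  have hx0 : x ≠ 0 := by
    intro h0
    rw [h0, zero_pow hp] at hx
    exact (Units.ne_zero z) hx.symm
  refine ⟨Units.mk0 x hx0, Units.ext ?_⟩
  rw [Units.val_pow_eq_pow_val, Units.val_mk0]
  exact hx

lemma exists_zpow_root (z : ℂˣ) {m : ℤ} (hm : m ≠ 0) : ∃ r : ℂˣ, r ^ m = z := by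
  rcases lt_or_gt_of_ne hm with h | h
  · obtain ⟨r, hr⟩ := exists_pow_root z⁻¹ (p := (-m).toNat) (by omega)
    refine ⟨r, ?_⟩
    have hm' : m = -(((-m).toNat : ℤ)) := by omega
    rw [hm', zpow_neg, zpow_natCast, hr, inv_inv]
  · obtain ⟨r, hr⟩ := exists_pow_root z (p := m.toNat) (by omega)
    refine ⟨r, ?_⟩
    have hm' : m = ((m.toNat : ℤ)) := by omega
    rw [hm', zpow_natCast, hr]

lemma units_val_prod {β : Type*} (s : Finset β) (f : β → ℂˣ) :
    ((∏ b ∈ s, f b : ℂˣ) : ℂ) = ∏ b ∈ s, ((f b : ℂ)) := by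
  induction s using Finset.cons_induction with
  | empty => simp
  | cons a s ha ih => rw [Finset.prod_cons, Finset.prod_cons, Units.val_mul, ih]

lemma key_lemma {u v : Fin n → ℂ} (hu : u ∈ closure (torusOrbit M v)) :
    (esupp M u).indicator u ∈ torusOrbit M ((esupp M v).indicator v) := by
  classical
  obtain ⟨p, hp, hconvp⟩ := mem_closure_iff_seq_limit.mp hu
  choose t ht using hp
  have hconv : Tendsto (fun k => torusAct M (t k) v) atTop (𝓝 u) :=
    hconvp.congr fun k => ht k
  set E := esupp M v with hE
  have hEu : esupp M u = E := esupp_eq_of_closure hconv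
  have hsupp : ∀ j, v j = 0 → u j = 0 := fun j h => limit_supp_subset hconv h
  have hune : ∀ j, j ∈ E → u j ≠ 0 := fun j hj => limit_ne_zero_on_esupp hconv hj
  have hvne : ∀ j, j ∈ E → v j ≠ 0 := fun j hj => hj.1
  set uv : Fin n → ℂˣ := fun j =>
    if h : j ∈ E then Units.mk0 (u j / v j) (div_ne_zero (hune j h) (hvne j h)) else 1 with huv
  set w : Fin n → Additive ℂˣ := fun j => Additive.ofMul (uv j) with hw
  set slin : (Fin n → ℤ) →ₗ[ℤ] Additive ℂˣ := (Pi.basisFun ℤ (Fin n)).constr ℤ w with hslin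
  have hslin_apply : ∀ a : Fin n → ℤ, slin a = ∑ j, a j • w j := by
    intro a
    rw [hslin, Module.Basis.constr_apply_fintype]
    simp [Pi.basisFun_equivFun]
  set φ : (Fin n → ℤ) →ₗ[ℤ] (Fin d → ℤ) := M.mulVecLin with hφ
  -- kernel property
  have hker : ∀ a : Fin n → ℤ, (∀ j ∉ E, a j = 0) → φ a = 0 → slin a = 0 := by
    intro a haE harel
    have hrel : ∀ i, ∑ j, a j * M i j = 0 := by
      intro i
      have h0 := congrFun harel i
      rw [hφ] at h0
      simpa [Matrix.mulVecLin_apply, Matrix.mulVec, dotProduct, mul_comm] using h0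
    have hprod := limit_relation hconv a hrel
    rw [hslin_apply]
    have hunits : ∏ j, uv j ^ (a j) = 1 := by
      apply Units.ext
      rw [Units.val_one, units_val_prod]
      have hcoe : ∀ j : Fin n, ((uv j ^ (a j) : ℂˣ) : ℂ) = ((uv j : ℂ)) ^ (a j) :=
        fun j => Units.val_zpow_eq_zpow_val _ _
      rw [Finset.prod_congr rfl fun j _ => hcoe j]
      have hval : ∀ j, ((uv j : ℂ)) ^ (a j)
          = (u j ^ (a j).toNat * v j ^ (-a j).toNat)
            / (u j ^ (-a j).toNat * v j ^ (a j).toNat) := by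
        intro j
        by_cases hj : j ∈ E
        · rw [huv]
          simp only [dif_pos hj, Units.val_mk0]
          have hu0 := hune j hj
          have hv0 := hvne j hj
          have hsplit : a j = ((a j).toNat : ℤ) - ((-a j).toNat : ℤ) := by omega
          conv_lhs => rw [hsplit]
          rw [zpow_sub₀ (div_ne_zero hu0 hv0), zpow_natCast, zpow_natCast, div_pow, div_pow]
          rw [div_div_div_eq]
          congr 1
          ring
        · have haj : a j = 0 := haE j hj
          simp [haj]
      have hden : (∏ j, (u j ^ (-a j).toNat * v j ^ (a j).toNat)) ≠ 0 := by
        rw [Finset.prod_ne_zero_iff]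
        intro j _
        by_cases hj : j ∈ E
        · exact mul_ne_zero (pow_ne_zero _ (hune j hj)) (pow_ne_zero _ (hvne j hj))
        · have haj : a j = 0 := haE j hj
          simp [haj]
      calc ∏ j, ((uv j : ℂ)) ^ (a j)
          = ∏ j, ((u j ^ (a j).toNat * v j ^ (-a j).toNat)
              / (u j ^ (-a j).toNat * v j ^ (a j).toNat)) :=
            Finset.prod_congr rfl fun j _ => hval j
        _ = (∏ j, (u j ^ (a j).toNat * v j ^ (-a j).toNat))
              / (∏ j, (u j ^ (-a j).toNat * v j ^ (a j).toNat)) := Finset.prod_div_distrib _ _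
        _ = 1 := (div_eq_one_iff_eq hden).mpr hprod
    have htm : Additive.toMul (∑ j, a j • w j) = (1 : ℂˣ) := by
      rw [toMul_sum, ← hunits]
      refine Finset.prod_congr rfl fun j _ => ?_
      rw [toMul_zsmul]
      rfl
    have h2 := congrArg Additive.ofMul htm
    simpa using h2
  -- Smith normal form for the image of the support submodule
  set A := suppSub E with hA
  set P : Submodule ℤ (Fin d → ℤ) := A.map φ with hP
  obtain ⟨n', bM, bN, femb, aa, hsnf⟩ := Submodule.smithNormalForm (Pi.basisFun ℤ (Fin d)) P
  have hpre : ∀ k : Fin n', ∃ a : Fin n → ℤ, a ∈ A ∧ φ a = (bN k : Fin d → ℤ) := by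
    intro k
    have hmem : ((bN k : Fin d → ℤ)) ∈ A.map φ := (bN k).2
    obtain ⟨a, ha, h2⟩ := Submodule.mem_map.mp hmem
    exact ⟨a, ha, h2⟩
  choose pre hpreA hpreφ using hpre
  have haa : ∀ k, aa k ≠ 0 := by
    intro k hk
    have h0 := hsnf k
    rw [hk, zero_smul] at h0
    exact (Module.Basis.ne_zero bN k) (Submodule.coe_eq_zero.mp h0)
  have hroot : ∀ k : Fin n', ∃ r : ℂˣ, r ^ (aa k) = Additive.toMul (slin (pre k)) :=
    fun k => exists_zpow_root _ (haa k)
  choose r hr using hroot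
  set g : Fin d → Additive ℂˣ :=
    fun i => if h : ∃ k, femb k = i then Additive.ofMul (r h.choose) else 0 with hg
  set T : (Fin d → ℤ) →ₗ[ℤ] Additive ℂˣ := bM.constr ℤ g with hT
  have hgf : ∀ k, g (femb k) = Additive.ofMul (r k) := by
    intro k
    have hex : ∃ k', femb k' = femb k := ⟨k, rfl⟩
    rw [hg]
    simp only [dif_pos hex]
    congr 1
    exact congrArg r (femb.injective hex.choose_spec)
  have hTbN : ∀ k, T ((bN k : Fin d → ℤ)) = slin (pre k) := by
    intro k
    rw [hsnf k, map_smul, hT, Module.Basis.constr_basis, hgf k]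
    have h7 : Additive.toMul (aa k • Additive.ofMul (r k)) = Additive.toMul (slin (pre k)) := by
      rw [toMul_zsmul, toMul_ofMul, hr k]
    exact Additive.toMul.injective h7
  have hTA : ∀ a, a ∈ A → T (φ a) = slin a := by
    intro a ha
    have hmem : φ a ∈ P := Submodule.mem_map_of_mem ha
    set pp : P := ⟨φ a, hmem⟩ with hpp
    set a' : Fin n → ℤ := ∑ k, (bN.repr pp k) • pre k with ha'
    have ha'A : a' ∈ A := Submodule.sum_mem _ fun k _ => Submodule.smul_mem _ _ (hpreA k)
    have hφa' : φ a' = φ a := by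
      rw [ha', map_sum]
      have h1 : ∑ k, φ ((bN.repr pp k) • pre k) = ∑ k, (bN.repr pp k) • (bN k : Fin d → ℤ) :=
        Finset.sum_congr rfl fun k _ => by rw [map_smul, hpreφ]
      rw [h1]
      have h2 : ((∑ k, (bN.repr pp k) • bN k : P) : Fin d → ℤ)
          = ∑ k, (bN.repr pp k) • (bN k : Fin d → ℤ) := by
        rw [AddSubmonoidClass.coe_finset_sum]
        exact Finset.sum_congr rfl fun k _ => by rw [Submodule.coe_smul]
      rw [← h2, Module.Basis.sum_repr]
    have hsa : slin a = slin a' := by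
      have hdiff : slin (a - a') = 0 := by
        refine hker (a - a') (fun j hj => ?_) ?_
        · have h3 : a j = 0 := ha j hj
          have h4 : a' j = 0 := ha'A j hj
          simp [h3, h4]
        · rw [map_sub, hφa', sub_self]
      rw [map_sub] at hdiff
      have := sub_eq_zero.mp hdiff
      exact this
    have hTr : T (φ a) = slin a' := by
      rw [← hφa', ha', map_sum, map_sum, map_sum]
      refine Finset.sum_congr rfl fun k _ => ?_
      simp only [map_smul]
      rw [hpreφ, hTbN]
    rw [hTr, ← hsa]
  -- the final group element
  set tfin : Fin d → ℂˣ := fun i => Additive.toMul (T (Pi.single i 1)) with htfin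
  have hchi_t : ∀ j, j ∈ E → (chi M tfin j : ℂˣ) = uv j := by
    intro j hj
    have h2 : (fun i => M i j) = ∑ i, (Pi.single i (M i j) : Fin d → ℤ) := by
      funext i'
      rw [Finset.sum_apply]
      rw [Finset.sum_eq_single i']
      · simp
      · intro b _ hb
        exact Pi.single_eq_of_ne (Ne.symm hb) _
      · intro hmem
        exact absurd (Finset.mem_univ i') hmem
    have h1 : (chi M tfin j) = Additive.toMul (T (fun i => M i j)) := by
      rw [chi, h2, map_sum, toMul_sum]
      refine Finset.prod_congr rfl fun i _ => ?_
      have h3 : (Pi.single i (M i j) : Fin d → ℤ) = (M i j) • (Pi.single i 1 : Fin d → ℤ) := by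
        funext i'
        rcases eq_or_ne i' i with rfl | hne
        · simp
        · simp [Pi.single_eq_of_ne hne]
      rw [h3, map_smul, toMul_zsmul, htfin]
    have h4 : (fun i => M i j) = φ (Pi.single j 1 : Fin n → ℤ) := by
      funext i
      rw [hφ]
      simp only [Matrix.mulVecLin_apply, Matrix.mulVec, dotProduct]
      rw [Finset.sum_eq_single j]
      · simp
      · intro b _ hb
        rw [Pi.single_eq_of_ne hb, mul_zero]
      · intro hmem
        exact absurd (Finset.mem_univ j) hmem
    have h5 : (Pi.single j 1 : Fin n → ℤ) ∈ A := by
      intro j' hj'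
      have : j' ≠ j := fun h => hj' (h ▸ hj)
      exact Pi.single_eq_of_ne this _
    rw [h1, h4, hTA _ h5, hslin_apply]
    have h6 : ∑ j', (Pi.single j 1 : Fin n → ℤ) j' • w j' = w j := by
      rw [Finset.sum_eq_single j]
      · simp
      · intro b _ hb
        rw [Pi.single_eq_of_ne hb, zero_smul]
      · intro hmem
        exact absurd (Finset.mem_univ j) hmem
    rw [h6, hw]
    rfl
  refine ⟨tfin, ?_⟩
  funext j
  rw [hEu]
  by_cases hj : j ∈ E
  · rw [Set.indicator_of_mem hj, torusAct_apply, Set.indicator_of_mem hj, hchi_t j hj, huv]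
    simp only [dif_pos hj, Units.val_mk0]
    rw [div_mul_cancel₀ _ (hvne j hj)]
  · rw [Set.indicator_of_notMem hj, torusAct_apply, Set.indicator_of_notMem hj, mul_zero]

end TorusAux

/-- Two orbit closures intersect iff the orbits of the restrictions `ṽ = v|_{esupp v}` and
`w̃ = w|_{esupp w}` to the essential supports coincide. -/
theorem orbit_closures_intersect_iff {d n : ℕ} (M : Matrix (Fin d) (Fin n) ℤ)
    (v w : Fin n → ℂ) :
    (closure (torusOrbit M v) ∩ closure (torusOrbit M w)).Nonempty ↔
      torusOrbit M ((esupp M v).indicator v) = torusOrbit M ((esupp M w).indicator w) := by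
  constructor
  · rintro ⟨u, huv, huw⟩
    have h1 := TorusAux.key_lemma huv
    have h2 := TorusAux.key_lemma huw
    exact (TorusAux.orbit_eq_of_mem h1).symm.trans (TorusAux.orbit_eq_of_mem h2)
  · intro h
    refine ⟨(esupp M v).indicator v, TorusAux.tilde_mem_closure v, ?_⟩
    have h1 : (esupp M v).indicator v ∈ torusOrbit M ((esupp M w).indicator w) := by
      rw [← h]
      exact TorusAux.mem_orbit_self _
    obtain ⟨t, hteq⟩ := h1
    rw [hteq]
    exact TorusAux.act_mem_closure_orbit t (TorusAux.tilde_mem_closure w)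
end
end
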